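/- arXiv:1405.2331 — 4 statements merged into one kernel-verified Lean document; each statement's English description precedes it below -/
import Mathlib

section
/- Let 𝔤 be a finite-dimensional nilpotent real Lie algebra with dim 𝔤 ≥ 2, equipped with a norm making it a normed real vector space. Then for every X ∈ 𝔤 there exist a sequence (Yₖ)ₖ∈ℕ in 𝔤 converging to X and a sequence (𝔥ₖ)ₖ∈ℕ of pairwise distinct Lie ideals of 𝔤, each of codimension one, such that Yₖ ∈ 𝔥ₖ for every k. -/
open Module LieModule

/-- In a nilpotent Lie algebra of finrank ≥ 2, the derived ideal has codimension ≥ 2. -/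
lemma derived_codim_two_aux
    (g : Type*) [LieRing g] [LieAlgebra ℝ g] [FiniteDimensional ℝ g]
    [LieRing.IsNilpotent g]
    (hdim : 2 ≤ Module.finrank ℝ g) :
    Module.finrank ℝ (lowerCentralSeries ℝ g g 1 : LieIdeal ℝ g) + 2
      ≤ Module.finrank ℝ g := by
  set D : LieIdeal ℝ g := lowerCentralSeries ℝ g g 1 with hDdef
  by_contra hcon
  push_neg at hcon
  -- So finrank D ≥ finrank g - 1; find x with D ⊔ span{x} = ⊤.
  have hx : ∃ x : g, (D : Submodule ℝ g) ⊔ (Submodule.span ℝ {x}) = ⊤ := by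
    by_cases htop : (D : Submodule ℝ g) = ⊤
    · exact ⟨0, by rw [Submodule.span_zero_singleton, sup_bot_eq]; exact htop⟩
    · obtain ⟨x, hxD⟩ : ∃ x, x ∉ (D : Submodule ℝ g) := by
        by_contra hc; push_neg at hc; exact htop (Submodule.eq_top_iff'.mpr hc)
      refine ⟨x, ?_⟩
      have hxmem : x ∈ (D : Submodule ℝ g) ⊔ Submodule.span ℝ {x} :=
        Submodule.mem_sup_right (Submodule.mem_span_singleton_self x)
      have hlt : (D : Submodule ℝ g) < (D : Submodule ℝ g) ⊔ Submodule.span ℝ {x} :=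
        lt_of_le_of_ne le_sup_left (fun h => hxD (h ▸ hxmem))
      have h1 := Submodule.finrank_lt_finrank_of_lt hlt
      have h2 := Submodule.finrank_le ((D : Submodule ℝ g) ⊔ Submodule.span ℝ {x})
      have hDD : Module.finrank ℝ D = Module.finrank ℝ ((D : Submodule ℝ g) : Submodule ℝ g) := rfl
      apply Submodule.eq_top_of_finrank_eq
      omega
  obtain ⟨x, hx⟩ := hx
  -- lcs 1 ≤ lcs 2
  have h12 : D ≤ lowerCentralSeries ℝ g g 2 := by
    have hD1 : D = ⁅(⊤ : LieIdeal ℝ g), (⊤ : LieSubmodule ℝ g g)⁆ := by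
      rw [hDdef]
      rw [show (1 : ℕ) = 0 + 1 from rfl, LieModule.lowerCentralSeries_succ, LieModule.lowerCentralSeries_zero]
    have hD2 : lowerCentralSeries ℝ g g 2 = ⁅(⊤ : LieIdeal ℝ g), D⁆ := by
      rw [show (2 : ℕ) = 1 + 1 from rfl, LieModule.lowerCentralSeries_succ, hDdef]
    rw [hD2, hD1, LieSubmodule.lie_le_iff]
    intro a _ b _
    -- decompose b
    have hb : b ∈ (D : Submodule ℝ g) ⊔ Submodule.span ℝ {x} := by rw [hx]; trivial
    obtain ⟨mb, hmb, sb, hsb, hmsb⟩ := Submodule.mem_sup.mp hb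
    obtain ⟨c, rfl⟩ := Submodule.mem_span_singleton.mp hsb
    have ha : a ∈ (D : Submodule ℝ g) ⊔ Submodule.span ℝ {x} := by rw [hx]; trivial
    obtain ⟨ma, hma, sa, hsa, hmsa⟩ := Submodule.mem_sup.mp ha
    obtain ⟨c', rfl⟩ := Submodule.mem_span_singleton.mp hsa
    have key : ⁅a, b⁆ = ⁅a, mb⁆ + c • (-⁅x, ma⁆) := by
      rw [← hmsb, ← hmsa]
      simp only [lie_add, add_lie, lie_smul, smul_lie, lie_self, smul_zero, add_zero]
      rw [← lie_skew x ma]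
      module
    rw [key]
    refine add_mem (LieSubmodule.lie_mem_lie trivial hmb) (Submodule.smul_mem _ _ (neg_mem ?_))
    exact LieSubmodule.lie_mem_lie trivial hma
  -- lcs (k+1) = lcs 1 for all k, hence D = ⊥
  have hconst : ∀ k : ℕ, D ≤ lowerCentralSeries ℝ g g (k + 1) := by
    intro k
    induction k with
    | zero => exact le_refl _
    | succ k ih =>
      calc D ≤ lowerCentralSeries ℝ g g 2 := h12
        _ = ⁅(⊤ : LieIdeal ℝ g), lowerCentralSeries ℝ g g 1⁆ := by
            rw [show (2:ℕ) = 1 + 1 from rfl, LieModule.lowerCentralSeries_succ]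
        _ ≤ ⁅(⊤ : LieIdeal ℝ g), lowerCentralSeries ℝ g g (k+1)⁆ :=
            LieSubmodule.mono_lie_right _ ih
        _ = lowerCentralSeries ℝ g g (k + 2) := (LieModule.lowerCentralSeries_succ ℝ g g (k+1)).symm
  obtain ⟨k, hk⟩ := LieModule.IsNilpotent.nilpotent ℝ g g
  have hDbot : D = ⊥ := by
    rcases k with _ | k
    · exact le_antisymm (hk ▸ (antitone_lowerCentralSeries ℝ g g (Nat.zero_le 1))) bot_le
    · exact le_antisymm (hk ▸ hconst k) bot_le
  have : Module.finrank ℝ (D : Submodule ℝ g) = 0 := by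
    rw [hDbot]; exact finrank_bot ℝ g
  have hDD : Module.finrank ℝ D = Module.finrank ℝ ((D : Submodule ℝ g)) := rfl
  omega

/-- In a finite-dimensional nilpotent real Lie algebra of dimension at least 2,
equipped with a norm `N` making it a normed real vector space, every element `X`
is the limit of a sequence `Yₖ` such that each `Yₖ` lies in a codimension-one
Lie ideal `𝔥ₖ`, the ideals `𝔥ₖ` being pairwise distinct. -/
theorem approx_by_elements_of_distinct_codim_one_ideals
    (g : Type*) [LieRing g] [LieAlgebra ℝ g] [FiniteDimensional ℝ g]
    [LieRing.IsNilpotent g]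
    (hdim : 2 ≤ Module.finrank ℝ g)
    (N : g → ℝ)
    (hN₀ : ∀ x : g, N x = 0 ↔ x = 0)
    (hN₁ : ∀ (a : ℝ) (x : g), N (a • x) = |a| * N x)
    (hN₂ : ∀ x y : g, N (x + y) ≤ N x + N y)
    (X : g) :
    ∃ (Y : ℕ → g) (h : ℕ → LieIdeal ℝ g),
      (∀ ε : ℝ, 0 < ε → ∃ K : ℕ, ∀ k ≥ K, N (Y k - X) < ε) ∧
      Function.Injective h ∧
      (∀ k, Module.finrank ℝ (h k) = Module.finrank ℝ g - 1) ∧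
      (∀ k, Y k ∈ h k) := by
  classical
  set n := Module.finrank ℝ g with hn
  set D : LieIdeal ℝ g := lowerCentralSeries ℝ g g 1 with hDdef
  have hcodim : Module.finrank ℝ (D : Submodule ℝ g) + 2 ≤ n :=
    derived_codim_two_aux g hdim
  -- first functional ψ: vanishes on D and X
  set p : Submodule ℝ g := (D : Submodule ℝ g) ⊔ Submodule.span ℝ {X} with hp
  have hpfin : Module.finrank ℝ p < n := by
    have h1 : Module.finrank ℝ p ≤ Module.finrank ℝ (D : Submodule ℝ g)
        + Module.finrank ℝ (Submodule.span ℝ {X}) := by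
      rw [hp]; exact Submodule.finrank_add_le_finrank_add_finrank _ _
    have h2 : Module.finrank ℝ (Submodule.span ℝ {X}) ≤ 1 := by
      by_cases hX : X = (0 : g)
      · rw [hX, Submodule.span_zero_singleton]; simp
      · rw [finrank_span_singleton hX]
    omega
  have hplt : p < ⊤ := by
    refine lt_top_iff_ne_top.mpr (fun hc => ?_)
    rw [hc, finrank_top] at hpfin; omega
  obtain ⟨ψ, hψ0, hψp⟩ := Submodule.exists_dual_map_eq_bot_of_lt_top hplt inferInstance
  have hψker : ∀ y ∈ p, ψ y = 0 := by
    intro y hy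
    have : ψ y ∈ p.map ψ := Submodule.mem_map_of_mem hy
    rw [hψp] at this; simpa using this
  obtain ⟨e₀, he₀⟩ : ∃ e₀, ψ e₀ ≠ 0 := by
    by_contra hc; push_neg at hc; exact hψ0 (by ext v; simpa using hc v)
  set e : g := (ψ e₀)⁻¹ • e₀ with he
  have hψe : ψ e = 1 := by rw [he]; simp [inv_mul_cancel₀ he₀]
  -- second functional φ: vanishes on D and e
  set q : Submodule ℝ g := (D : Submodule ℝ g) ⊔ Submodule.span ℝ {e} with hq
  have hqfin : Module.finrank ℝ q < n := by
    have h1 : Module.finrank ℝ q ≤ Module.finrank ℝ (D : Submodule ℝ g)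
        + Module.finrank ℝ (Submodule.span ℝ {e}) := by
      rw [hq]; exact Submodule.finrank_add_le_finrank_add_finrank _ _
    have h2 : Module.finrank ℝ (Submodule.span ℝ {e}) ≤ 1 := by
      by_cases hE : e = (0 : g)
      · rw [hE, Submodule.span_zero_singleton]; simp
      · rw [finrank_span_singleton hE]
    omega
  have hqlt : q < ⊤ := by
    refine lt_top_iff_ne_top.mpr (fun hc => ?_)
    rw [hc, finrank_top] at hqfin; omega
  obtain ⟨φ, hφ0, hφq⟩ := Submodule.exists_dual_map_eq_bot_of_lt_top hqlt inferInstance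
  have hφker : ∀ y ∈ q, φ y = 0 := by
    intro y hy
    have : φ y ∈ q.map φ := Submodule.mem_map_of_mem hy
    rw [hφq] at this; simpa using this
  have hφe : φ e = 0 := hφker e (Submodule.mem_sup_right (Submodule.mem_span_singleton_self e))
  have hψX : ψ X = 0 := hψker X (Submodule.mem_sup_right (Submodule.mem_span_singleton_self X))
  have hφD : ∀ y ∈ (D : Submodule ℝ g), φ y = 0 := fun y hy =>
    hφker y (Submodule.mem_sup_left hy)
  have hψD : ∀ y ∈ (D : Submodule ℝ g), ψ y = 0 := fun y hy =>
    hψker y (Submodule.mem_sup_left hy)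
  -- element d with φ d = 1, ψ d = 0
  obtain ⟨d₀, hd₀⟩ : ∃ d₀, φ d₀ ≠ 0 := by
    by_contra hc; push_neg at hc; exact hφ0 (by ext v; simpa using hc v)
  set d : g := (φ d₀)⁻¹ • (d₀ - ψ d₀ • e) with hd
  have hφd : φ d = 1 := by
    rw [hd]; simp [hφe, inv_mul_cancel₀ hd₀]
  have hψd : ψ d = 0 := by
    rw [hd]; simp [hψe]
  -- the family of functionals
  set f : ℕ → (g →ₗ[ℝ] ℝ) := fun k => φ + ((k : ℝ) + 1) • ψ with hf
  have hfD : ∀ k, ∀ y ∈ (D : Submodule ℝ g), f k y = 0 := by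
    intro k y hy
    simp [hf, hφD y hy, hψD y hy]
  have hfe : ∀ k, f k e = (k : ℝ) + 1 := by intro k; simp [hf, hφe, hψe]
  have hfd : ∀ k, f k d = 1 := by intro k; simp [hf, hφd, hψd]
  have hf0 : ∀ k, f k ≠ 0 := by
    intro k hc
    have : f k e = 0 := by rw [hc]; rfl
    rw [hfe k] at this
    have : ((k : ℝ) + 1) ≠ 0 := by positivity
    simp_all
  -- the ideals
  set h : ℕ → LieIdeal ℝ g := fun k =>
    { toSubmodule := LinearMap.ker (f k)
      lie_mem := by
        intro a m _
        have hmem : ⁅a, m⁆ ∈ D := by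
          rw [hDdef, show (1 : ℕ) = 0 + 1 from rfl, LieModule.lowerCentralSeries_succ,
            LieModule.lowerCentralSeries_zero]
          exact LieSubmodule.lie_mem_lie trivial trivial
        exact hfD k _ hmem } with hh
  have hmemh : ∀ k (v : g), v ∈ h k ↔ f k v = 0 := by
    intro k v; rw [hh]; exact LinearMap.mem_ker
  -- the sequence
  set Y : ℕ → g := fun k => X - (φ X / ((k : ℝ) + 1)) • e with hY
  refine ⟨Y, h, ?_, ?_, ?_, ?_⟩
  · -- convergence
    intro ε hε
    have hNnonneg : 0 ≤ N e := by
      have h1 : N (e + (-1 : ℝ) • e) ≤ N e + N ((-1 : ℝ) • e) := hN₂ e _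
      have h2 : e + (-1 : ℝ) • e = 0 := by module
      have h3 : N ((-1 : ℝ) • e) = N e := by rw [hN₁]; simp
      rw [h2, (hN₀ 0).mpr rfl, h3] at h1
      linarith
    set C : ℝ := |φ X| * N e with hC
    have hC0 : 0 ≤ C := mul_nonneg (abs_nonneg _) hNnonneg
    obtain ⟨K, hK⟩ := exists_nat_gt (C / ε)
    refine ⟨K, fun k hk => ?_⟩
    have hk1 : (0 : ℝ) < (k : ℝ) + 1 := by positivity
    have hdiff : Y k - X = (-(φ X / ((k : ℝ) + 1))) • e := by rw [hY]; module
    rw [hdiff, hN₁]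
    have habs : |(-(φ X / ((k : ℝ) + 1)))| = |φ X| / ((k : ℝ) + 1) := by
      rw [abs_neg, abs_div, abs_of_pos hk1]
    rw [habs, div_mul_eq_mul_div, ← hC]
    rw [div_lt_iff₀ hk1]
    have hCek : C < ε * (K : ℝ) := by
      calc C = (C / ε) * ε := by field_simp
        _ < (K : ℝ) * ε := by
            apply mul_lt_mul_of_pos_right hK hε
        _ = ε * (K : ℝ) := mul_comm _ _
    calc C < ε * (K : ℝ) := hCek
      _ ≤ ε * ((k : ℝ) + 1) := by
          apply mul_le_mul_of_nonneg_left _ hε.le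
          have : (K : ℝ) ≤ (k : ℝ) := Nat.cast_le.mpr hk
          linarith
  · -- injectivity
    intro k m hkm
    by_contra hne
    set v : g := ((k : ℝ) + 1) • d - e with hv
    have hvk : v ∈ h k := by
      rw [hmemh]
      simp [hv, map_sub, map_smul, hfd, hfe]
    have hvm : v ∈ h m := hkm ▸ hvk
    rw [hmemh] at hvm
    simp only [hv, map_sub, map_smul, hfd, hfe, smul_eq_mul, mul_one] at hvm
    have : (k : ℝ) = (m : ℝ) := by linarith
    exact hne (Nat.cast_injective this)
  · -- finrank
    intro k
    have := Module.Dual.finrank_ker_add_one_of_ne_zero (hf0 k)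
    have heq : Module.finrank ℝ (h k) = Module.finrank ℝ (LinearMap.ker (f k)) := rfl
    rw [heq]
    omega
  · -- membership
    intro k
    rw [hmemh]
    have hk1 : ((k : ℝ) + 1) ≠ 0 := by positivity
    simp only [hY, hf, LinearMap.add_apply, LinearMap.smul_apply, map_sub, map_smul,
      smul_eq_mul, hψX, hφe, hψe]
    field_simp
    ring
end

section
/- Let M be a metric space and Φ a flow on M. Let V ⊆ M be an open set with compact closure, and assume that every point x in the closure of V satisfying Φ(t, x) = x for all t ∈ ℝ actually lies in V (that is, the frontier of V contains no fixed point of the flow). Then there exists τ > 0 such that for every t with 0 < t ≤ τ, the set {x ∈ V : Φ(t, x) = x} is compact. -/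
open Set Filter Topology

/-- If `x` is fixed by `Φ t`, it is fixed by `Φ (n * t)` for every `n : ℕ`. -/
lemma flow_fixed_nsmul {M : Type*} [TopologicalSpace M] (Φ : Flow ℝ M) {x : M} {t : ℝ}
    (h : Φ t x = x) : ∀ n : ℕ, Φ ((n : ℝ) * t) x = x := by
  intro n
  induction n with
  | zero => simp only [Nat.cast_zero, zero_mul]; exact Φ.map_zero_apply x
  | succ n ih =>
    have : ((n + 1 : ℕ) : ℝ) * t = (n : ℝ) * t + t := by push_cast; ring
    rw [this, Φ.map_add, h, ih]

/-- Let `Φ` be a flow on a metric space `M` and let `V` be an open set with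
compact closure whose frontier contains no fixed point of the flow (every
fixed point in the closure of `V` lies in `V`).  Then there is `τ > 0` such
that for every `t` with `0 < t ≤ τ` the set of fixed points of `Φ t` in `V`
is compact. -/
theorem flow_exists_tau_fixedPoints_compact
    (M : Type*) [MetricSpace M] (Φ : Flow ℝ M)
    (V : Set M) (hV : IsOpen V) (hVc : IsCompact (closure V))
    (hiso : ∀ x ∈ closure V, (∀ t : ℝ, Φ t x = x) → x ∈ V) :
    ∃ τ : ℝ, 0 < τ ∧ ∀ t : ℝ, 0 < t → t ≤ τ →
      IsCompact {x ∈ V | Φ t x = x} := by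
  have hfr : IsCompact (frontier V) :=
    hVc.of_isClosed_subset isClosed_frontier frontier_subset_closure
  have key : ∃ τ : ℝ, 0 < τ ∧ ∀ x ∈ frontier V, ∀ t : ℝ, 0 < t → t ≤ τ → Φ t x ≠ x := by
    by_contra h
    push_neg at h
    choose x hx t ht0 htle hfix using fun n : ℕ => h (1 / (n + 1)) (by positivity)
    obtain ⟨p, hp, φ, hφ, hconv⟩ := hfr.tendsto_subseq hx
    -- the periods along the subsequence tend to 0
    have ht0' : Tendsto (fun n => t (φ n)) atTop (𝓝 0) := by
      have h1 : Tendsto (fun n : ℕ => 1 / ((φ n : ℝ) + 1)) atTop (𝓝 0) :=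
        (tendsto_one_div_add_atTop_nhds_zero_nat).comp hφ.tendsto_atTop
      refine tendsto_of_tendsto_of_tendsto_of_le_of_le tendsto_const_nhds h1 ?_ ?_
      · exact fun n => (ht0 (φ n)).le
      · exact fun n => htle (φ n)
    -- p is a fixed point of the flow for all nonneg times
    have hfixp : ∀ s : ℝ, 0 ≤ s → Φ s p = p := by
      intro s hs
      set k : ℕ → ℕ := fun n => ⌊s / t (φ n)⌋₊ with hk
      have hkt : Tendsto (fun n => (k n : ℝ) * t (φ n)) atTop (𝓝 s) := by
        have hub : ∀ n, (k n : ℝ) * t (φ n) ≤ s := by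
          intro n
          have := Nat.floor_le (div_nonneg hs (ht0 (φ n)).le)
          calc (k n : ℝ) * t (φ n) ≤ (s / t (φ n)) * t (φ n) :=
                mul_le_mul_of_nonneg_right this (ht0 (φ n)).le
            _ = s := div_mul_cancel₀ s (ht0 (φ n)).ne'
        have hlb : ∀ n, s - t (φ n) ≤ (k n : ℝ) * t (φ n) := by
          intro n
          have h1 : s / t (φ n) < (k n : ℝ) + 1 := Nat.lt_floor_add_one _
          have h2 : s < ((k n : ℝ) + 1) * t (φ n) := by
            have := mul_lt_mul_of_pos_right h1 (ht0 (φ n))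
            rwa [div_mul_cancel₀ s (ht0 (φ n)).ne'] at this
          nlinarith
        have hl : Tendsto (fun n => s - t (φ n)) atTop (𝓝 s) := by
          simpa using tendsto_const_nhds.sub ht0'
        exact tendsto_of_tendsto_of_tendsto_of_le_of_le hl tendsto_const_nhds hlb hub
      have hflow : Tendsto (fun n => Φ ((k n : ℝ) * t (φ n)) (x (φ n))) atTop (𝓝 (Φ s p)) := by
        have : Continuous (Function.uncurry Φ.toFun) := Φ.cont'
        exact (this.tendsto (s, p)).comp (hkt.prodMk_nhds hconv)
      have heq : (fun n => Φ ((k n : ℝ) * t (φ n)) (x (φ n))) = fun n => x (φ n) := by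
        funext n
        exact flow_fixed_nsmul Φ (hfix (φ n)) (k n)
      rw [heq] at hflow
      exact tendsto_nhds_unique hflow hconv
    have hfixall : ∀ s : ℝ, Φ s p = p := by
      intro s
      rcases le_or_gt 0 s with hs | hs
      · exact hfixp s hs
      · have h1 : Φ (-s) p = p := hfixp (-s) (by linarith)
        calc Φ s p = Φ s (Φ (-s) p) := by rw [h1]
          _ = Φ 0 p := by rw [← Φ.map_add]; ring_nf
          _ = p := Φ.map_zero_apply p
    have hpV : p ∈ V := hiso p (frontier_subset_closure hp) hfixall
    rw [hV.frontier_eq] at hp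
    exact hp.2 hpV
  obtain ⟨τ, hτ, hkey⟩ := key
  refine ⟨τ, hτ, fun t ht0 htτ => ?_⟩
  have hset : {x ∈ V | Φ t x = x} = closure V ∩ {x | Φ t x = x} := by
    ext x
    constructor
    · rintro ⟨hxV, hxf⟩
      exact ⟨subset_closure hxV, hxf⟩
    · rintro ⟨hxc, hxf⟩
      refine ⟨?_, hxf⟩
      by_contra hxV
      exact hkey x (hV.frontier_eq ▸ ⟨hxc, hxV⟩) t ht0 htτ hxf
  rw [hset]
  exact hVc.inter_right (isClosed_eq (Φ.continuous continuous_const continuous_id) continuous_id)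
end

section
/- Let M be a Hausdorff topological space and Φ a flow on M. Suppose (tₖ)ₖ∈ℕ is a sequence of positive real numbers with tₖ → 0, and (pₖ)ₖ∈ℕ is a sequence in M converging to a point q such that Φ(tₖ, pₖ) = pₖ for every k. Then q is a fixed point of the flow: Φ(s, q) = q for all s ∈ ℝ. -/
open Filter Topology

lemma flow_int_fixed (M : Type*) [TopologicalSpace M] (Φ : Flow ℝ M)
    {c : ℝ} {x : M} (h : Φ c x = x) : ∀ n : ℤ, Φ (n * c) x = x := by
  have hneg : Φ (-c) x = x := by
    conv_lhs => rw [← h]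
    rw [← Φ.map_add, neg_add_cancel, Φ.map_zero_apply]
  intro n
  induction n using Int.induction_on with
  | zero => simp [Φ.map_zero_apply x]
  | succ n ih =>
    push_cast at ih ⊢
    rw [add_mul, one_mul, add_comm, Φ.map_add, ih, h]
  | pred n ih =>
    push_cast at ih ⊢
    rw [sub_mul, one_mul, sub_eq_add_neg, add_comm, Φ.map_add, ih, hneg]

/-- If `tₖ → 0` is a sequence of positive times, `pₖ → q`, and each `pₖ` is
fixed by the time-`tₖ` map of a flow on a Hausdorff space, then `q` is a fixed
point of the flow. -/
theorem limit_of_periodic_points_is_fixed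
    (M : Type*) [TopologicalSpace M] [T2Space M] (Φ : Flow ℝ M)
    (t : ℕ → ℝ) (ht_pos : ∀ k, 0 < t k) (ht : Tendsto t atTop (𝓝 0))
    (p : ℕ → M) (q : M) (hp : Tendsto p atTop (𝓝 q))
    (hfix : ∀ k, Φ (t k) (p k) = p k) :
    ∀ s : ℝ, Φ s q = q := by
  intro s
  set n : ℕ → ℤ := fun k => ⌊s / t k⌋ with hn
  have hst : Tendsto (fun k => (n k : ℝ) * t k) atTop (𝓝 s) := by
    have hbound : ∀ k, |(n k : ℝ) * t k - s| ≤ t k := by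
      intro k
      have h1 : (n k : ℝ) ≤ s / t k := Int.floor_le _
      have h2 : s / t k < n k + 1 := Int.lt_floor_add_one _
      have hpos := ht_pos k
      have hA : (n k : ℝ) * t k ≤ s := (le_div_iff₀ hpos).mp h1
      have hB : s < ((n k : ℝ) + 1) * t k := (div_lt_iff₀ hpos).mp h2
      rw [abs_le]
      constructor
      · nlinarith
      · linarith
    have : Tendsto (fun k => (n k : ℝ) * t k - s) atTop (𝓝 0) := by
      apply squeeze_zero_norm hbound
      simpa using ht
    have := this.add_const s
    simpa using this
  have hcont : Tendsto (fun k => Φ ((n k : ℝ) * t k) (p k)) atTop (𝓝 (Φ s q)) :=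
    (Φ.cont'.tendsto (s, q)).comp (hst.prodMk_nhds hp)
  have heq : (fun k => Φ ((n k : ℝ) * t k) (p k)) = p := by
    funext k
    exact flow_int_fixed M Φ (hfix k) (n k)
  rw [heq] at hcont
  exact tendsto_nhds_unique hcont hp
end

section
/- Let G be a Lie group modeled on a finite-dimensional real normed space. Then there exists a neighborhood U of the identity element of G such that every g ∈ U lies on a one-parameter subgroup: for each g ∈ U there is a continuous group homomorphism X : (ℝ, +) → G with X(1) = g. -/
open scoped Manifold
open Filter Metric Set

set_option maxHeartbeats 1600000

section AuxC

variable {E : Type*} [NormedAddCommGroup E] [NormedSpace ℝ E]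

lemma aux_bilin_bound (f : E × E → E) (hf : ContDiffAt ℝ 2 f (0,0))
    (h1 : ∀ᶠ u : E in nhds 0, f (u, 0) = 0) (h2 : ∀ᶠ v : E in nhds 0, f (0, v) = 0) :
    ∃ L > (0:ℝ), ∃ δ > (0:ℝ), ∀ a b : E, ‖a‖ ≤ δ → ‖b‖ ≤ δ → ‖f (a,b)‖ ≤ L * ‖a‖ * ‖b‖ := by
  obtain ⟨K, t, ht, hK⟩ := (hf.fderiv_right (m := 1) (by norm_num)).exists_lipschitzOnWith
  have hev : ∀ᶠ y in nhds ((0:E),(0:E)), DifferentiableAt ℝ f y := by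
    have h := hf.eventually (by norm_num)
    exact h.mono fun y hy => hy.differentiableAt (by norm_num)
  obtain ⟨r1, hr1, hball1⟩ := Metric.mem_nhds_iff.mp (Filter.inter_mem ht hev)
  obtain ⟨r2, hr2, hball2⟩ := Metric.mem_nhds_iff.mp (Filter.inter_mem h1 h2)
  set r : ℝ := min r1 r2 with hr
  have hr0 : 0 < r := lt_min hr1 hr2
  set J : E →L[ℝ] E × E := (0 : E →L[ℝ] E).prod (ContinuousLinearMap.id ℝ E) with hJ
  have hJ1 : ‖J‖ ≤ 1 := by
    apply ContinuousLinearMap.opNorm_le_bound _ zero_le_one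
    intro x
    simp [hJ, Prod.norm_def]
  have hmemE : ∀ a v : E, ‖a‖ < r → ‖v‖ < r → ((a, v) : E × E) ∈ ball ((0:E),(0:E)) r1 := by
    intro a v ha hv
    rw [mem_ball, dist_eq_norm]
    simp only [Prod.sub_def, sub_zero]
    rw [Prod.norm_def]
    exact max_lt (lt_of_lt_of_le ha (min_le_left _ _)) (lt_of_lt_of_le hv (min_le_left _ _))
  have hdiff : ∀ a v : E, ‖a‖ < r → ‖v‖ < r → DifferentiableAt ℝ f (a, v) :=
    fun a v ha hv => (hball1 (hmemE a v ha hv)).2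
  have hderiv : ∀ a v : E, ‖a‖ < r → ‖v‖ < r →
      HasFDerivAt (fun y => f (a, y)) ((fderiv ℝ f (a,v)).comp J) v := by
    intro a v ha hv
    have h' : HasFDerivAt (fun y : E => ((a, y) : E × E)) J v :=
      (hasFDerivAt_const a v).prodMk (hasFDerivAt_id v)
    exact ((hdiff a v ha hv).hasFDerivAt).comp v h'
  have hzero : ∀ v : E, ‖v‖ < r → (fderiv ℝ f ((0:E), v)).comp J = 0 := by
    intro v hv
    have e1 := hderiv (0:E) v (by rw [norm_zero]; exact hr0) hv
    have e2 : HasFDerivAt (fun y : E => f (0, y)) (0 : E →L[ℝ] E) v := by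
      apply (hasFDerivAt_const (0:E) v).congr_of_eventuallyEq
      have hb : ball (0:E) r ∈ nhds v := by
        apply (isOpen_ball).mem_nhds
        rwa [mem_ball, dist_zero_right]
      refine Filter.eventuallyEq_of_mem hb fun y hy => ?_
      refine (hball2 (show y ∈ ball (0:E) r2 from ?_)).2
      rw [mem_ball, dist_zero_right] at hy ⊢
      exact lt_of_lt_of_le hy (min_le_right _ _)
    exact e1.unique e2
  have hbound : ∀ a v : E, ‖a‖ < r → ‖v‖ < r →
      ‖(fderiv ℝ f (a,v)).comp J‖ ≤ K * ‖a‖ := by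
    intro a v ha hv
    have h0 : (fderiv ℝ f (a,v)).comp J =
        (fderiv ℝ f (a,v) - fderiv ℝ f ((0:E),v)).comp J := by
      rw [ContinuousLinearMap.sub_comp, hzero v hv, sub_zero]
    rw [h0]
    calc ‖(fderiv ℝ f (a,v) - fderiv ℝ f ((0:E),v)).comp J‖
        ≤ ‖fderiv ℝ f (a,v) - fderiv ℝ f ((0:E),v)‖ * ‖J‖ := ContinuousLinearMap.opNorm_comp_le _ _
      _ ≤ ‖fderiv ℝ f (a,v) - fderiv ℝ f ((0:E),v)‖ * 1 := by
          apply mul_le_mul_of_nonneg_left hJ1 (norm_nonneg _)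
      _ = ‖fderiv ℝ f (a,v) - fderiv ℝ f ((0:E),v)‖ := mul_one _
      _ ≤ K * ‖a‖ := by
          have hm1 := (hball1 (hmemE a v ha hv)).1
          have hm2 := (hball1 (hmemE (0:E) v (by rw [norm_zero]; exact hr0) hv)).1
          have := hK.dist_le_mul _ hm1 _ hm2
          rw [dist_eq_norm, dist_eq_norm] at this
          refine le_trans this ?_
          apply mul_le_mul_of_nonneg_left _ (NNReal.coe_nonneg K)
          simp only [Prod.sub_def, sub_zero, sub_self]
          rw [Prod.norm_def]
          simp [norm_nonneg]
  refine ⟨(K:ℝ) + 1, by positivity, r/2, by positivity, ?_⟩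
  intro a b ha hb
  have ha' : ‖a‖ < r := lt_of_le_of_lt ha (by linarith)
  have hb' : ‖b‖ < r := lt_of_le_of_lt hb (by linarith)
  have hmvt := Convex.norm_image_sub_le_of_norm_hasFDerivWithin_le
    (f := fun y => f (a, y)) (f' := fun v => (fderiv ℝ f (a,v)).comp J)
    (C := (K:ℝ) * ‖a‖) (s := ball (0:E) r) (x := (0:E)) (y := b)
    (fun v hv => (hderiv a v ha' (by rwa [mem_ball, dist_zero_right] at hv)).hasFDerivWithinAt)
    (fun v hv => hbound a v ha' (by rwa [mem_ball, dist_zero_right] at hv))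
    (convex_ball _ _) (mem_ball_self hr0) (by rwa [mem_ball, dist_zero_right])
  have hfa0 : f (a, 0) = 0 :=
    (hball2 (show a ∈ ball (0:E) r2 by
      rw [mem_ball, dist_zero_right]; exact lt_of_lt_of_le ha' (min_le_right _ _))).1
  simp only [hfa0, sub_zero] at hmvt
  calc ‖f (a,b)‖ ≤ (K:ℝ) * ‖a‖ * ‖b‖ := hmvt
    _ ≤ ((K:ℝ)+1) * ‖a‖ * ‖b‖ := by
        apply mul_le_mul_of_nonneg_right _ (norm_nonneg _)
        apply mul_le_mul_of_nonneg_right _ (norm_nonneg _)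
        linarith

lemma aux_sqrt_exists [CompleteSpace E] (q : E × E → E) (hq : ContDiffAt ℝ (⊤:ℕ∞) q (0,0))
    (h1 : ∀ᶠ u : E in nhds 0, q (u, 0) = u) (h2 : ∀ᶠ v : E in nhds 0, q (0, v) = v) :
    ∃ sq : E → E, ContinuousAt sq 0 ∧ sq 0 = 0 ∧ ∀ᶠ y in nhds (0:E), q (sq y, sq y) = y := by
  have hq00 : q (0,0) = 0 := h1.self_of_nhds
  set D := fderiv ℝ q ((0:E),(0:E)) with hD
  have hqd : HasStrictFDerivAt q D ((0:E),(0:E)) := hq.hasStrictFDerivAt (by simp)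
  set J1 : E →L[ℝ] E × E := (ContinuousLinearMap.id ℝ E).prod 0 with hJ1
  set J2 : E →L[ℝ] E × E := (0 : E →L[ℝ] E).prod (ContinuousLinearMap.id ℝ E) with hJ2
  have c1 : D.comp J1 = ContinuousLinearMap.id ℝ E := by
    have hinner : HasFDerivAt (fun u : E => ((u, (0:E)) : E × E)) J1 0 :=
      (hasFDerivAt_id _).prodMk (hasFDerivAt_const _ _)
    have e1 : HasFDerivAt (fun u : E => q (u, 0)) (D.comp J1) 0 :=
      HasFDerivAt.comp (x := (0:E)) (hqd.hasFDerivAt) hinner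
    have e2 : HasFDerivAt (fun u : E => q (u, 0)) (ContinuousLinearMap.id ℝ E) 0 := by
      have hid : HasFDerivAt (fun u : E => u) (ContinuousLinearMap.id ℝ E) 0 := hasFDerivAt_id _
      exact hid.congr_of_eventuallyEq h1
    exact e1.unique e2
  have c2 : D.comp J2 = ContinuousLinearMap.id ℝ E := by
    have hinner : HasFDerivAt (fun v : E => (((0:E), v) : E × E)) J2 0 :=
      (hasFDerivAt_const _ _).prodMk (hasFDerivAt_id _)
    have e1 : HasFDerivAt (fun v : E => q (0, v)) (D.comp J2) 0 :=
      HasFDerivAt.comp (x := (0:E)) (hqd.hasFDerivAt) hinner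
    have e2 : HasFDerivAt (fun v : E => q (0, v)) (ContinuousLinearMap.id ℝ E) 0 := by
      have hid : HasFDerivAt (fun v : E => v) (ContinuousLinearMap.id ℝ E) 0 := hasFDerivAt_id _
      exact hid.congr_of_eventuallyEq h2
    exact e1.unique e2
  set Jd : E →L[ℝ] E × E := (ContinuousLinearMap.id ℝ E).prod (ContinuousLinearMap.id ℝ E)
    with hJd
  have hdiag : HasStrictFDerivAt (fun u : E => ((u, u) : E × E)) Jd 0 :=
    (hasStrictFDerivAt_id _).prodMk (hasStrictFDerivAt_id _)
  have hr : HasStrictFDerivAt (fun u : E => q (u, u)) (D.comp Jd) 0 :=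
    HasStrictFDerivAt.comp (x := (0:E)) hqd hdiag
  have hfstrict : HasStrictFDerivAt (fun u : E => (2⁻¹:ℝ) • q (u, u))
      ((2⁻¹:ℝ) • (D.comp Jd)) 0 := hr.const_smul (2⁻¹:ℝ)
  have hB : (2⁻¹:ℝ) • (D.comp Jd) = ContinuousLinearMap.id ℝ E := by
    ext u
    have h1u : D (u, 0) = u := by
      have := ContinuousLinearMap.ext_iff.mp c1 u
      simpa [hJ1] using this
    have h2u : D (0, u) = u := by
      have := ContinuousLinearMap.ext_iff.mp c2 u
      simpa [hJ2] using this
    have hsum : D (u, u) = u + u := by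
      have : ((u, u) : E × E) = (u, 0) + (0, u) := by simp
      rw [this, map_add, h1u, h2u]
    simp [hJd, ContinuousLinearMap.smul_apply, hsum, smul_add]
    module
  rw [hB] at hfstrict
  have hfstrict' : HasStrictFDerivAt (fun u : E => (2⁻¹:ℝ) • q (u, u))
      ((ContinuousLinearEquiv.refl ℝ E : E ≃L[ℝ] E) : E →L[ℝ] E) 0 := by
    rwa [ContinuousLinearEquiv.coe_refl]
  set f : E → E := fun u : E => (2⁻¹:ℝ) • q (u, u) with hf
  have hq00' : q (0 : E × E) = 0 := hq00
  have hf0 : f 0 = 0 := by simp [hf, hq00', hq00]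
  set g : E → E := hfstrict'.localInverse f (ContinuousLinearEquiv.refl ℝ E) 0 with hg
  have hgc : ContinuousAt g (f 0) := hfstrict'.localInverse_continuousAt
  have hg0 : g 0 = 0 := by
    have h := hfstrict'.localInverse_apply_image
    rw [hf0] at h
    exact h
  have hginv : ∀ᶠ z in nhds (0:E), f (g z) = z := by
    have := hfstrict'.eventually_right_inverse
    rwa [hf0] at this
  refine ⟨fun y => g ((2⁻¹:ℝ) • y), ?_, ?_, ?_⟩
  · rw [hf0] at hgc
    have hgc' : ContinuousAt g ((2⁻¹:ℝ) • (0:E)) := by rwa [smul_zero]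
    have : ContinuousAt (fun y : E => (2⁻¹:ℝ) • y) 0 := (continuous_const_smul _).continuousAt
    exact hgc'.comp this
  · simp [hg0]
  · have tend : Tendsto (fun y : E => (2⁻¹:ℝ) • y) (nhds 0) (nhds 0) := by
      have h := ((continuous_const_smul ((2⁻¹:ℝ))).tendsto (0:E))
      rwa [smul_zero] at h
    filter_upwards [tend.eventually hginv] with y hy
    have : (2⁻¹:ℝ) • q (g ((2⁻¹:ℝ) • y), g ((2⁻¹:ℝ) • y)) = (2⁻¹:ℝ) • y := hy
    have h2 := congrArg (fun z => (2:ℝ) • z) this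
    simpa [smul_smul] using h2

variable {G : Type*} [Group G] [TopologicalSpace G] [IsTopologicalGroup G]

lemma aux_extend (X : ℝ → G) (hc : ContinuousOn X (Icc 0 1)) (h0 : X 0 = 1)
    (hadd : ∀ a b : ℝ, 0 ≤ a → 0 ≤ b → a + b ≤ 1 → X (a+b) = X a * X b)
    (hcomm : ∀ a b : ℝ, a ∈ Icc (0:ℝ) 1 → b ∈ Icc (0:ℝ) 1 → X a * X b = X b * X a) :
    ∃ Y : ℝ → G, Continuous Y ∧ (∀ s t : ℝ, Y (s+t) = Y s * Y t) ∧ Y 1 = X 1 := by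
  have hnpow : ∀ (k : ℕ) (a : ℝ), 0 ≤ a → (k:ℝ) * a ≤ 1 → X ((k:ℝ) * a) = X a ^ k := by
    intro k
    induction k with
    | zero => intro a _ _; simpa using h0
    | succ k ih =>
      intro a ha hk
      have hk1 : ((k:ℝ)+1) * a = (k:ℝ)*a + a := by ring
      push_cast at hk ⊢
      have hka : (k:ℝ) * a ≤ 1 := by nlinarith
      have h0k : 0 ≤ (k:ℝ) * a := by positivity
      rw [hk1, hadd _ _ h0k ha (by linarith), ih a ha hka, pow_succ]
  -- independence of the representation
  have key : ∀ t : ℝ, 0 ≤ t → ∀ n m : ℕ, 0 < n → 0 < m → t ≤ n →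
      X (t/n) ^ n = X (t/(n*m)) ^ (n*m) := by
    intro t ht n m hn hm htn
    have hnm : (0:ℝ) < (n:ℝ) * m := by positivity
    have h1 : (m:ℝ) * (t/((n:ℝ)*m)) = t/n := by field_simp
    have h2 : 0 ≤ t/((n:ℝ)*m) := by positivity
    have h3 : (m:ℝ) * (t/((n:ℝ)*m)) ≤ 1 := by
      rw [h1, div_le_one (by positivity)]; exact htn
    have : X (t/n) = X (t/((n:ℝ)*m)) ^ m := by
      rw [← h1, hnpow m _ h2 h3]
    rw [this, ← pow_mul, mul_comm m n]
  have hindep : ∀ t : ℝ, 0 ≤ t → ∀ n m : ℕ, 0 < n → 0 < m → t ≤ n → t ≤ m →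
      X (t/n) ^ n = X (t/m) ^ m := by
    intro t ht n m hn hm htn htm
    rw [key t ht n m hn hm htn, key t ht m n hm hn htm, mul_comm (m:ℝ) (n:ℝ), mul_comm m n]
  set P : ℝ → G := fun t => X (t / (⌊t⌋₊ + 1)) ^ (⌊t⌋₊ + 1) with hP
  have hPval : ∀ t : ℝ, 0 ≤ t → ∀ n : ℕ, 0 < n → t ≤ n → P t = X (t/n) ^ n := by
    intro t ht n hn htn
    have h1 : (0:ℕ) < ⌊t⌋₊ + 1 := Nat.succ_pos _
    have h2 : t ≤ (⌊t⌋₊ + 1 : ℕ) := by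
      push_cast
      exact (Nat.lt_floor_add_one t).le
    have h3 := hindep t ht (⌊t⌋₊ + 1) n h1 hn (by exact_mod_cast h2) htn
    push_cast at h3
    simpa [hP] using h3
  have hPadd : ∀ s t : ℝ, 0 ≤ s → 0 ≤ t → P (s+t) = P s * P t := by
    intro s t hs ht
    set n : ℕ := ⌊s⌋₊ + ⌊t⌋₊ + 2 with hn
    have hn0 : 0 < n := by omega
    have hsn : s ≤ n := by
      have := (Nat.lt_floor_add_one s).le
      push_cast [hn]; push_cast at this; linarith [Nat.cast_nonneg (α := ℝ) ⌊t⌋₊]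
    have htn : t ≤ n := by
      have := (Nat.lt_floor_add_one t).le
      push_cast [hn]; push_cast at this; linarith [Nat.cast_nonneg (α := ℝ) ⌊s⌋₊]
    have hstn : s + t ≤ n := by
      have h1 := (Nat.lt_floor_add_one s).le
      have h2 := (Nat.lt_floor_add_one t).le
      push_cast [hn]; linarith
    have hnR : (0:ℝ) < n := by exact_mod_cast hn0
    rw [hPval (s+t) (by linarith) n hn0 hstn, hPval s hs n hn0 hsn, hPval t ht n hn0 htn]
    have h1 : (s+t)/n = s/n + t/n := by ring
    have h2 : s/n + t/n ≤ 1 := by rw [← h1, div_le_one hnR]; exact hstn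
    rw [h1, hadd _ _ (by positivity) (by positivity) h2]
    have hcom : Commute (X (s/n)) (X (t/n)) := by
      refine hcomm _ _ ⟨by positivity, ?_⟩ ⟨by positivity, ?_⟩
      · rw [div_le_one hnR]; linarith
      · rw [div_le_one hnR]; linarith
    exact hcom.mul_pow n
  have hP0 : P 0 = 1 := by
    have := hPval 0 le_rfl 1 one_pos (by norm_num)
    simpa [h0] using this
  have hPcomm : ∀ s t : ℝ, 0 ≤ s → 0 ≤ t → Commute (P s) (P t) := by
    intro s t hs ht
    show P s * P t = P t * P s
    rw [← hPadd s t hs ht, add_comm, hPadd t s ht hs]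
  set Y : ℝ → G := fun t => if 0 ≤ t then P t else (P (-t))⁻¹ with hYdef
  have hYpos : ∀ t : ℝ, 0 ≤ t → Y t = P t := fun t ht => if_pos ht
  have hYneg : ∀ t : ℝ, t ≤ 0 → Y t = (P (-t))⁻¹ := by
    intro t ht
    rcases eq_or_lt_of_le ht with h|h
    · rw [h] at *; simp [hYdef, hP0]
    · exact if_neg (not_le.mpr h)
  refine ⟨Y, ?_, ?_, ?_⟩
  · -- continuity
    rw [continuous_iff_continuousAt]
    intro t
    obtain ⟨n, hn0', htn⟩ : ∃ n : ℕ, 0 < n ∧ |t| < n :=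
      ⟨⌊|t|⌋₊ + 1, Nat.succ_pos _, by push_cast; exact Nat.lt_floor_add_one _⟩
    have hn0 : (0:ℝ) < n := lt_of_le_of_lt (abs_nonneg t) htn
    have hrep : ∀ u : ℝ, |u| < n → Y u = X ((u+n)/(2*n)) ^ (2*n) * (P n)⁻¹ := by
      intro u hu
      have hu1 : -(n:ℝ) < u := neg_lt_of_abs_lt hu
      have hu2 : u < n := lt_of_abs_lt hu
      have h2n : (0:ℕ) < 2*n := by positivity
      have hP2 : P (u + n) = X ((u+n)/(2*n)) ^ (2*n) := by
        have := hPval (u+n) (by linarith) (2*n) h2n (by push_cast; linarith)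
        rw [this]; norm_num
      rcases le_or_gt 0 u with h|h
      · rw [hYpos u h]
        have := hPadd u n h hn0.le
        rw [← hP2, this, mul_inv_cancel_right]
      · rw [hYneg u h.le]
        have h3 := hPadd (-u) (u+n) (by linarith) (by linarith)
        have h4 : -u + (u + n) = (n:ℝ) := by ring
        rw [h4] at h3
        rw [← hP2, h3, mul_inv_rev, mul_inv_cancel_left]
    have hopen : {u : ℝ | |u| < n} ∈ nhds t := by
      have : IsOpen {u : ℝ | |u| < (n:ℝ)} := isOpen_lt continuous_abs continuous_const
      exact this.mem_nhds htn
    have hXat : ContinuousAt (fun u : ℝ => X ((u+n)/(2*n)) ^ (2*n) * (P n)⁻¹) t := by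
      have hmem : ((t+n)/(2*n)) ∈ Ioo (0:ℝ) 1 := by
        constructor
        · apply div_pos (by linarith [neg_lt_of_abs_lt htn]) (by linarith)
        · rw [div_lt_one (by linarith)]; linarith [lt_of_abs_lt htn]
      have hXc : ContinuousAt X ((t+n)/(2*n)) :=
        hc.continuousAt (Icc_mem_nhds hmem.1 hmem.2)
      have harg : ContinuousAt (fun u : ℝ => (u+n)/(2*n)) t :=
        ((continuousAt_id.add continuousAt_const).div_const _)
      exact ((ContinuousAt.comp (f := fun u : ℝ => (u + (n:ℝ)) / (2 * (n:ℝ))) (g := X) hXc harg).pow _).mul continuousAt_const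
    exact hXat.congr (Filter.eventuallyEq_of_mem hopen fun u hu => (hrep u hu)).symm
  · -- homomorphism
    intro s t
    rcases le_or_gt 0 s with hs|hs <;> rcases le_or_gt 0 t with ht|ht <;>
      rcases le_or_gt 0 (s+t) with hst|hst
    · rw [hYpos _ hst, hYpos _ hs, hYpos _ ht, hPadd s t hs ht]
    · linarith
    · -- s ≥ 0, t < 0, s+t ≥ 0
      rw [hYpos _ hst, hYpos _ hs, hYneg _ ht.le]
      have h1 := hPadd (s+t) (-t) hst (by linarith)
      have h2 : s + t + -t = s := by ring
      rw [h2] at h1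
      rw [h1, mul_inv_cancel_right]
    · -- s ≥ 0, t < 0, s+t < 0
      rw [hYneg _ hst.le, hYpos _ hs, hYneg _ ht.le]
      have h1 := hPadd s (-(s+t)) hs (by linarith)
      have h2 : s + -(s+t) = -t := by ring
      rw [h2] at h1
      have c : Commute (P s) ((P (-(s+t)))⁻¹) :=
        (hPcomm s (-(s+t)) hs (by linarith)).inv_right
      rw [h1, mul_inv_rev, ← mul_assoc, c.eq, mul_assoc, mul_inv_cancel, mul_one]
    · -- s < 0, t ≥ 0, s+t ≥ 0
      rw [hYpos _ hst, hYneg _ hs.le, hYpos _ ht]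
      have h1 := hPadd (-s) (s+t) (by linarith) hst
      have h2 : -s + (s+t) = t := by ring
      rw [h2] at h1
      rw [h1, inv_mul_cancel_left]
    · -- s < 0, t ≥ 0, s+t < 0
      rw [hYneg _ hst.le, hYneg _ hs.le, hYpos _ ht]
      have h1 := hPadd t (-(s+t)) ht (by linarith)
      have h2 : t + -(s+t) = -s := by ring
      rw [h2] at h1
      rw [h1, mul_inv_rev, mul_assoc, inv_mul_cancel, mul_one]
    · linarith
    · -- s < 0, t < 0
      rw [hYneg _ hst.le, hYneg _ hs.le, hYneg _ ht.le]
      have h1 := hPadd (-s) (-t) (by linarith) (by linarith)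
      have h2 : -s + -t = -(s+t) := by ring
      rw [h2] at h1
      have c := ((hPcomm (-s) (-t) (by linarith) (by linarith)).inv_left).inv_right
      rw [h1, mul_inv_rev, c.eq]
  · -- Y 1 = X 1
    rw [hYpos 1 zero_le_one]
    have := hPval 1 zero_le_one 1 one_pos (by norm_num)
    simpa using this

lemma aux_core [CompleteSpace E] (q : E × E → E) (Θ : E → G) (sq : E → E) (L δ : ℝ)
    (hL : 0 < L) (hδ : 0 < δ)
    (he : ∀ a b : E, ‖a‖ ≤ δ → ‖b‖ ≤ δ → ‖q (a,b) - a - b‖ ≤ L * ‖a‖ * ‖b‖)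
    (hsq : ∀ y : E, ‖y‖ ≤ δ → q (sq y, sq y) = y ∧ ‖sq y‖ ≤ 3/4 * ‖y‖ ∧
      ‖sq y‖ ≤ ‖y‖/2 * (1 + L * ‖y‖))
    (hqc : ∀ a b : E, ‖a‖ ≤ δ → ‖b‖ ≤ δ → ContinuousAt q (a,b))
    (hΘ1 : Θ 0 = 1)
    (hΘm : ∀ a b : E, ‖a‖ ≤ δ → ‖b‖ ≤ δ → Θ a * Θ b = Θ (q (a,b)))
    (hΘi : ∀ a b : E, ‖a‖ ≤ δ → ‖b‖ ≤ δ → Θ a = Θ b → a = b)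
    (hΘc : ∀ a : E, ‖a‖ ≤ δ → ContinuousAt Θ a)
    (w : E) (hw : ‖w‖ ≤ δ/40) (hwL : L * ‖w‖ ≤ 1/40) :
    ∃ X : ℝ → G, ContinuousOn X (Icc 0 1) ∧ X 0 = 1 ∧ X 1 = Θ w ∧
      (∀ a b : ℝ, 0 ≤ a → 0 ≤ b → a + b ≤ 1 → X (a+b) = X a * X b) ∧
      (∀ a b : ℝ, a ∈ Icc (0:ℝ) 1 → b ∈ Icc (0:ℝ) 1 → X a * X b = X b * X a) := by
  have hW0 : (0:ℝ) ≤ ‖w‖ := norm_nonneg w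
  set u : ℕ → E := fun n => sq^[n] w with hu
  have hu0 : u 0 = w := rfl
  have husucc : ∀ n, u (n+1) = sq (u n) := fun n => Function.iterate_succ_apply' sq n w
  -- decay bounds for u
  have hubnd : ∀ n, ‖u n‖ ≤ (3/4)^n * ‖w‖ ∧ ‖u n‖ ≤ (2 - (3/4)^n) * ‖w‖ / 2^n := by
    intro n
    induction n with
    | zero =>
      refine ⟨by simp [hu0], ?_⟩
      have h : (2 - (3/4:ℝ)^0) * ‖w‖ / 2^0 = ‖w‖ := by norm_num
      rw [h, hu0]
    | succ n ih =>
      have ha0 : (0:ℝ) < (3/4)^n := by positivity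
      have ha1 : ((3:ℝ)/4)^n ≤ 1 := pow_le_one₀ (by norm_num) (by norm_num)
      have hc0 : (0:ℝ) < (2:ℝ)^n := by positivity
      have hB0 : (0:ℝ) ≤ ‖u n‖ := norm_nonneg _
      have hunδ : ‖u n‖ ≤ δ := by
        calc ‖u n‖ ≤ (3/4)^n * ‖w‖ := ih.1
          _ ≤ 1 * ‖w‖ := by apply mul_le_mul_of_nonneg_right ha1 hW0
          _ = ‖w‖ := one_mul _
          _ ≤ δ/40 := hw
          _ ≤ δ := by linarith
      obtain ⟨hs1, hs2, hs3⟩ := hsq (u n) hunδ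
      rw [husucc n] at *
      constructor
      · calc ‖sq (u n)‖ ≤ 3/4 * ‖u n‖ := hs2
          _ ≤ 3/4 * ((3/4)^n * ‖w‖) := by
              apply mul_le_mul_of_nonneg_left ih.1 (by norm_num)
          _ = (3/4)^(n+1) * ‖w‖ := by ring
      · have hLB : L * ‖u n‖ ≤ (3/4)^n / 40 := by
          calc L * ‖u n‖ ≤ L * ((3/4)^n * ‖w‖) := by
                apply mul_le_mul_of_nonneg_left ih.1 hL.le
            _ = (3/4)^n * (L * ‖w‖) := by ring
            _ ≤ (3/4)^n * (1/40) := by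
                apply mul_le_mul_of_nonneg_left hwL ha0.le
            _ = (3/4)^n / 40 := by ring
        have hstep2 : ‖u n‖ * (1 + L * ‖u n‖) ≤
            ((2 - (3/4)^n) * ‖w‖ / 2^n) * (1 + (3/4)^n/40) := by
          apply mul_le_mul ih.2 (by linarith) (by positivity)
          apply div_nonneg (by nlinarith) hc0.le
        have hstep3 : ((2:ℝ) - (3/4)^n) * (1 + (3/4)^n/40) ≤ 2 - 3/4 * (3/4)^n := by
          nlinarith [ha0.le, ha1, mul_pos ha0 ha0]
        calc ‖sq (u n)‖ ≤ ‖u n‖/2 * (1 + L * ‖u n‖) := hs3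
          _ = ‖u n‖ * (1 + L * ‖u n‖) / 2 := by ring
          _ ≤ ((2 - (3/4)^n) * ‖w‖ / 2^n) * (1 + (3/4)^n/40) / 2 := by linarith
          _ = ((2 - (3/4)^n) * (1 + (3/4)^n/40)) * ‖w‖ / 2^(n+1) := by ring
          _ ≤ (2 - 3/4 * (3/4)^n) * ‖w‖ / 2^(n+1) := by
              apply div_le_div_of_nonneg_right ?_ (by positivity)
              exact mul_le_mul_of_nonneg_right hstep3 hW0
          _ = (2 - (3/4)^(n+1)) * ‖w‖ / 2^(n+1) := by ring_nf
  have huW : ∀ n, ‖u n‖ ≤ ‖w‖ := by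
    intro n
    calc ‖u n‖ ≤ (3/4)^n * ‖w‖ := (hubnd n).1
      _ ≤ 1 * ‖w‖ := mul_le_mul_of_nonneg_right
          (pow_le_one₀ (by norm_num) (by norm_num)) hW0
      _ = ‖w‖ := one_mul _
  have huδ : ∀ n, ‖u n‖ ≤ δ := fun n => le_trans (huW n) (by linarith)
  have hu2 : ∀ n, (2:ℝ)^n * ‖u n‖ ≤ 2 * ‖w‖ := by
    intro n
    have h := (hubnd n).2
    have hc0 : (0:ℝ) < (2:ℝ)^n := by positivity
    have ha0 : (0:ℝ) < (3/4)^n := by positivity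
    rw [le_div_iff₀ hc0] at h
    calc (2:ℝ)^n * ‖u n‖ = ‖u n‖ * 2^n := by ring
      _ ≤ (2 - (3/4)^n) * ‖w‖ := h
      _ ≤ 2 * ‖w‖ := by nlinarith
  -- the iterated products in E
  set v : ℕ → ℕ → E := fun n m => (fun x => q (x, u n))^[m] 0 with hv
  have hv0 : ∀ n, v n 0 = 0 := fun n => rfl
  have hvsucc : ∀ n m, v n (m+1) = q (v n m, u n) := fun n m =>
    Function.iterate_succ_apply' _ m 0
  have hvbnd : ∀ n m, m ≤ 2^(n+1) → ‖v n m‖ ≤ 3 * m * ‖u n‖ := by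
    intro n m
    induction m with
    | zero => intro _; simp [hv0]
    | succ m ih =>
      intro hm
      have hm' : m ≤ 2^(n+1) := le_trans (Nat.le_succ m) hm
      have ihm := ih hm'
      have hcast : (m:ℝ) ≤ 2^(n+1) := by
        exact_mod_cast Nat.cast_le.mpr hm'
      have hun0 : (0:ℝ) ≤ ‖u n‖ := norm_nonneg _
      have h3m : 3 * (m:ℝ) * ‖u n‖ ≤ 12 * ‖w‖ := by
        calc 3 * (m:ℝ) * ‖u n‖ ≤ 3 * (2:ℝ)^(n+1) * ‖u n‖ := by
              apply mul_le_mul_of_nonneg_right _ hun0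
              linarith
          _ = 6 * ((2:ℝ)^n * ‖u n‖) := by ring
          _ ≤ 6 * (2 * ‖w‖) := by
              apply mul_le_mul_of_nonneg_left (hu2 n) (by norm_num)
          _ = 12 * ‖w‖ := by ring
      have hvδ : ‖v n m‖ ≤ δ := by
        calc ‖v n m‖ ≤ 3 * m * ‖u n‖ := ihm
          _ ≤ 12 * ‖w‖ := h3m
          _ ≤ 12 * (δ/40) := by linarith
          _ ≤ δ := by linarith
      have htri := he (v n m) (u n) hvδ (huδ n)
      have hLv : L * ‖v n m‖ ≤ 2 := by
        calc L * ‖v n m‖ ≤ L * (12 * ‖w‖) := by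
              apply mul_le_mul_of_nonneg_left (le_trans ihm h3m) hL.le
          _ = 12 * (L * ‖w‖) := by ring
          _ ≤ 12 * (1/40) := by linarith
          _ ≤ 2 := by norm_num
      have hnorm : ‖v n (m+1)‖ ≤ ‖v n m‖ + ‖u n‖ + L * ‖v n m‖ * ‖u n‖ := by
        rw [hvsucc]
        calc ‖q (v n m, u n)‖
            = ‖(q (v n m, u n) - v n m - u n) + v n m + u n‖ := by
              congr 1
              abel
          _ ≤ ‖q (v n m, u n) - v n m - u n‖ + ‖v n m‖ + ‖u n‖ := by
              refine le_trans (norm_add_le _ _) ?_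
              have := norm_add_le (q (v n m, u n) - v n m - u n) (v n m)
              linarith
          _ ≤ L * ‖v n m‖ * ‖u n‖ + ‖v n m‖ + ‖u n‖ := by linarith
          _ = ‖v n m‖ + ‖u n‖ + L * ‖v n m‖ * ‖u n‖ := by ring
      push_cast
      calc ‖v n (m+1)‖ ≤ ‖v n m‖ + ‖u n‖ + L * ‖v n m‖ * ‖u n‖ := hnorm
        _ ≤ 3*m*‖u n‖ + ‖u n‖ + 2 * ‖u n‖ := by nlinarith
        _ = 3*((m:ℝ)+1)*‖u n‖ := by ring
  have hv12 : ∀ n m, m ≤ 2^(n+1) → ‖v n m‖ ≤ 12 * ‖w‖ := by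
    intro n m hm
    have hcast : (m:ℝ) ≤ 2^(n+1) := by exact_mod_cast Nat.cast_le.mpr hm
    calc ‖v n m‖ ≤ 3 * m * ‖u n‖ := hvbnd n m hm
      _ ≤ 3 * (2:ℝ)^(n+1) * ‖u n‖ := by
          apply mul_le_mul_of_nonneg_right _ (norm_nonneg _)
          linarith
      _ = 6 * ((2:ℝ)^n * ‖u n‖) := by ring
      _ ≤ 6 * (2 * ‖w‖) := mul_le_mul_of_nonneg_left (hu2 n) (by norm_num)
      _ = 12 * ‖w‖ := by ring
  have h12δ : 12 * ‖w‖ ≤ δ := by linarith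
  have hvδa : ∀ n m, m ≤ 2^(n+1) → ‖v n m‖ ≤ δ := fun n m hm =>
    le_trans (hv12 n m hm) h12δ
  -- q shifts by a small amount
  have hq_a : ∀ a b : E, ‖a‖ ≤ 12*‖w‖ → ‖b‖ ≤ 12*‖w‖ → ‖q (a,b) - a‖ ≤ 2 * ‖b‖ := by
    intro a b ha hb
    have haδ : ‖a‖ ≤ δ := le_trans ha h12δ
    have hbδ : ‖b‖ ≤ δ := le_trans hb h12δ
    have htri := he a b haδ hbδ
    have hLa : L * ‖a‖ ≤ 1 := by
      calc L * ‖a‖ ≤ L * (12*‖w‖) := mul_le_mul_of_nonneg_left ha hL.le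
        _ = 12 * (L * ‖w‖) := by ring
        _ ≤ 12 * (1/40) := by linarith
        _ ≤ 1 := by norm_num
    have h1 : ‖q (a,b) - a‖ ≤ ‖b‖ + L * ‖a‖ * ‖b‖ := by
      calc ‖q (a,b) - a‖ = ‖(q (a,b) - a - b) + b‖ := by congr 1; abel
        _ ≤ ‖q (a,b) - a - b‖ + ‖b‖ := norm_add_le _ _
        _ ≤ L * ‖a‖ * ‖b‖ + ‖b‖ := by linarith
        _ = ‖b‖ + L * ‖a‖ * ‖b‖ := by ring
    nlinarith [norm_nonneg b]
  -- bound on q of two bounded vectors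
  have hqnorm : ∀ a b : E, ‖a‖ ≤ 12*‖w‖ → ‖b‖ ≤ 12*‖w‖ → ‖q (a,b)‖ ≤ δ := by
    intro a b ha hb
    have h := hq_a a b ha hb
    calc ‖q (a,b)‖ = ‖(q (a,b) - a) + a‖ := by congr 1; abel
      _ ≤ ‖q (a,b) - a‖ + ‖a‖ := norm_add_le _ _
      _ ≤ 2*‖b‖ + ‖a‖ := by linarith
      _ ≤ 2*(12*‖w‖) + 12*‖w‖ := by linarith
      _ = 36 * ‖w‖ := by ring
      _ ≤ δ := by linarith
  -- group-side: powers of Θ (u n)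
  have hΘv : ∀ n m, m ≤ 2^(n+1) → Θ (u n) ^ m = Θ (v n m) := by
    intro n m
    induction m with
    | zero => intro _; simp [hv0 n, hΘ1]
    | succ m ih =>
      intro hm
      have hm' : m ≤ 2^(n+1) := le_trans (Nat.le_succ m) hm
      rw [pow_succ, ih hm', hΘm (v n m) (u n) (hvδa n m hm') (huδ n), ← hvsucc]
  -- q on two power-vectors
  have hqvv : ∀ n a b, a + b ≤ 2^(n+1) → q (v n a, v n b) = v n (a+b) := by
    intro n a b hab
    have haa : a ≤ 2^(n+1) := le_trans (Nat.le_add_right a b) hab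
    have hbb : b ≤ 2^(n+1) := le_trans (Nat.le_add_left b a) hab
    apply hΘi _ _ (hqnorm _ _ (hv12 n a haa) (hv12 n b hbb)) (hvδa n (a+b) hab)
    rw [← hΘm _ _ (hvδa n a haa) (hvδa n b hbb), ← hΘv n a haa, ← hΘv n b hbb,
      ← pow_add, hΘv n (a+b) hab]
  -- doubling
  have hdouble : ∀ n, Θ (u (n+1)) * Θ (u (n+1)) = Θ (u n) := by
    intro n
    rw [hΘm _ _ (huδ (n+1)) (huδ (n+1)), husucc n, (hsq (u n) (huδ n)).1]
  have hiter : ∀ j n k, k ≤ 2^(n+1) → Θ (u (n+j)) ^ (2^j * k) = Θ (u n) ^ k := by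
    intro j
    induction j with
    | zero => intro n k _; simp
    | succ j ih =>
      intro n k hk
      have hn1 : n + (j+1) = (n+1) + j := by omega
      have h2k : 2^(j+1) * k = 2^j * (2*k) := by ring
      have hk2 : 2*k ≤ 2^((n+1)+1) := by
        calc 2*k ≤ 2*2^(n+1) := Nat.mul_le_mul (le_refl 2) hk
          _ = 2^((n+1)+1) := by ring
      rw [hn1, h2k, ih (n+1) (2*k) hk2, pow_mul, pow_two, hdouble n]
  have hv6 : ∀ n m, m ≤ 2^n → ‖v n m‖ ≤ 6*‖w‖ := by
    intro n m hm
    have hm' : m ≤ 2^(n+1) := le_trans hm (Nat.pow_le_pow_right (by norm_num) (by omega))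
    have hcast : (m:ℝ) ≤ 2^n := by exact_mod_cast Nat.cast_le.mpr hm
    calc ‖v n m‖ ≤ 3 * m * ‖u n‖ := hvbnd n m hm'
      _ ≤ 3 * (2:ℝ)^n * ‖u n‖ := by
          apply mul_le_mul_of_nonneg_right _ (norm_nonneg _)
          linarith
      _ = 3 * ((2:ℝ)^n * ‖u n‖) := by ring
      _ ≤ 3 * (2 * ‖w‖) := mul_le_mul_of_nonneg_left (hu2 n) (by norm_num)
      _ = 6 * ‖w‖ := by ring
  -- floor facts
  have hfl : ∀ (n : ℕ) (x : ℝ), 0 ≤ x → x ≤ 1 → ⌊(2:ℝ)^n * x⌋₊ ≤ 2^n := by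
    intro n x hx0 hx1
    have h : (2:ℝ)^n * x ≤ ((2^n : ℕ):ℝ) := by
      push_cast
      nlinarith [pow_pos (show (0:ℝ) < 2 by norm_num) n]
    calc ⌊(2:ℝ)^n * x⌋₊ ≤ ⌊((2^n : ℕ):ℝ)⌋₊ := Nat.floor_mono h
      _ = 2^n := Nat.floor_natCast _
  -- the key Cauchy estimate
  have hKE : ∀ t : ℝ, t ∈ Icc (0:ℝ) 1 → ∀ n N : ℕ, n ≤ N →
      ‖v N ⌊(2:ℝ)^N * t⌋₊ - v n ⌊(2:ℝ)^n * t⌋₊‖ ≤ 12 * ‖w‖ / 2^n := by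
    intro t ht n N hnN
    obtain ⟨ht0, ht1⟩ := ht
    obtain ⟨j, rfl⟩ : ∃ j, N = n + j := ⟨N - n, by omega⟩
    set a := ⌊(2:ℝ)^n * t⌋₊ with ha
    set c := ⌊(2:ℝ)^(n+j) * t⌋₊ with hc
    have h2n0 : (0:ℝ) < 2^n := by positivity
    have h2j0 : (0:ℝ) < 2^j := by positivity
    have h2N : ((2:ℝ))^(n+j) = 2^n * 2^j := pow_add 2 n j
    have ha_le : (a:ℝ) ≤ 2^n * t := Nat.floor_le (by positivity)
    have ha_lt : (2:ℝ)^n * t < a + 1 := Nat.lt_floor_add_one _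
    have h1 : 2^j * a ≤ c := by
      apply Nat.le_floor
      push_cast
      calc ((2:ℝ)^j) * a ≤ 2^j * (2^n * t) := by
            apply mul_le_mul_of_nonneg_left ha_le h2j0.le
        _ = 2^(n+j) * t := by rw [h2N]; ring
    have h2 : c < 2^j * a + 2^j := by
      have : (2:ℝ)^(n+j) * t < ((2^j * a + 2^j : ℕ) : ℝ) := by
        push_cast
        calc (2:ℝ)^(n+j) * t = 2^j * (2^n * t) := by rw [h2N]; ring
          _ < 2^j * ((a:ℝ) + 1) := by
              apply mul_lt_mul_of_pos_left ha_lt h2j0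
          _ = 2^j * a + 2^j := by ring
      exact (Nat.floor_lt (by positivity)).mpr this
    set d := c - 2^j * a with hd
    have hceq : c = 2^j * a + d := by omega
    have hdle : d ≤ 2^j := by omega
    have han : a ≤ 2^n := hfl n t ht0 ht1
    have hcN : c ≤ 2^(n+j) := hfl (n+j) t ht0 ht1
    have hcN' : c ≤ 2^(n+j+1) := le_trans hcN (Nat.pow_le_pow_right (by norm_num) (by omega))
    have hdN' : d ≤ 2^(n+j+1) := le_trans hdle
      (Nat.pow_le_pow_right (by norm_num) (by omega))
    have han' : a ≤ 2^(n+1) := le_trans han (Nat.pow_le_pow_right (by norm_num) (by omega))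
    -- group identity transported to E
    have hvc : v (n+j) c = q (v n a, v (n+j) d) := by
      apply hΘi _ _ (hvδa (n+j) c hcN')
        (hqnorm _ _ (hv12 n a han') (hv12 (n+j) d hdN'))
      rw [← hΘv (n+j) c hcN', ← hΘm _ _ (hvδa n a han') (hvδa (n+j) d hdN'),
        ← hΘv n a han', ← hΘv (n+j) d hdN', ← hiter j n a han', ← pow_add, ← hceq]
    -- norm bound on the tail
    have huN : ‖u (n+j)‖ ≤ 2 * ‖w‖ / 2^(n+j) := by
      rw [le_div_iff₀ (by positivity)]
      calc ‖u (n+j)‖ * 2^(n+j) = 2^(n+j) * ‖u (n+j)‖ := by ring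
        _ ≤ 2 * ‖w‖ := hu2 (n+j)
    have hy : ‖v (n+j) d‖ ≤ 6 * ‖w‖ / 2^n := by
      have hdcast : (d:ℝ) ≤ 2^j := by exact_mod_cast Nat.cast_le.mpr hdle
      calc ‖v (n+j) d‖ ≤ 3 * d * ‖u (n+j)‖ := hvbnd (n+j) d hdN'
        _ ≤ 3 * (2:ℝ)^j * ‖u (n+j)‖ := by
            apply mul_le_mul_of_nonneg_right _ (norm_nonneg _)
            linarith
        _ ≤ 3 * (2:ℝ)^j * (2 * ‖w‖ / 2^(n+j)) := by
            apply mul_le_mul_of_nonneg_left huN (by positivity)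
        _ = 6 * ‖w‖ / 2^n := by
            rw [h2N]; field_simp; ring
    have hy12 : ‖v (n+j) d‖ ≤ 12 * ‖w‖ := by
      calc ‖v (n+j) d‖ ≤ 6 * ‖w‖ / 2^n := hy
        _ ≤ 6 * ‖w‖ / 1 := by
            apply div_le_div_of_nonneg_left (by linarith) (by norm_num) (one_le_pow₀ (by norm_num))
        _ = 6 * ‖w‖ := by ring
        _ ≤ 12 * ‖w‖ := by linarith
    have hx12 : ‖v n a‖ ≤ 12 * ‖w‖ := by
      have := hv6 n a han
      linarith
    calc ‖v (n+j) c - v n a‖ = ‖q (v n a, v (n+j) d) - v n a‖ := by rw [hvc]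
      _ ≤ 2 * ‖v (n+j) d‖ := hq_a _ _ hx12 hy12
      _ ≤ 2 * (6 * ‖w‖ / 2^n) := by linarith
      _ = 12 * ‖w‖ / 2^n := by ring
  -- the limit function
  have hlim : ∀ t : ℝ, t ∈ Icc (0:ℝ) 1 →
      ∃ y : E, Tendsto (fun n => v n ⌊(2:ℝ)^n * t⌋₊) atTop (nhds y) := by
    intro t ht
    apply cauchySeq_tendsto_of_complete
    apply cauchySeq_of_le_geometric (1/2 : ℝ) (12 * ‖w‖) (by norm_num)
    intro n
    rw [dist_eq_norm, norm_sub_rev]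
    have h := hKE t ht n (n+1) (by omega)
    calc ‖v (n+1) ⌊(2:ℝ)^(n+1) * t⌋₊ - v n ⌊(2:ℝ)^n * t⌋₊‖ ≤ 12 * ‖w‖ / 2^n := h
      _ = 12 * ‖w‖ * (1/2)^n := by
          rw [div_pow, one_pow]; ring
  set F : ℝ → E := fun t => if h : t ∈ Icc (0:ℝ) 1 then (hlim t h).choose else 0 with hFdef
  have hFt : ∀ t : ℝ, t ∈ Icc (0:ℝ) 1 →
      Tendsto (fun n => v n ⌊(2:ℝ)^n * t⌋₊) atTop (nhds (F t)) := by
    intro t ht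
    rw [hFdef]
    simp only [dif_pos ht]
    exact (hlim t ht).choose_spec
  have hFK : ∀ t : ℝ, t ∈ Icc (0:ℝ) 1 → ∀ n : ℕ,
      ‖F t - v n ⌊(2:ℝ)^n * t⌋₊‖ ≤ 12 * ‖w‖ / 2^n := by
    intro t ht n
    have h1 : Tendsto (fun N => ‖v N ⌊(2:ℝ)^N * t⌋₊ - v n ⌊(2:ℝ)^n * t⌋₊‖) atTop
        (nhds ‖F t - v n ⌊(2:ℝ)^n * t⌋₊‖) := ((hFt t ht).sub tendsto_const_nhds).norm
    exact le_of_tendsto h1 (eventually_atTop.mpr ⟨n, fun N hN => hKE t ht n N hN⟩)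
  have hF6 : ∀ t : ℝ, t ∈ Icc (0:ℝ) 1 → ‖F t‖ ≤ 6 * ‖w‖ := by
    intro t ht
    apply le_of_tendsto (hFt t ht).norm
    apply Filter.Eventually.of_forall
    intro n
    exact hv6 n _ (hfl n t ht.1 ht.2)
  have hFδ : ∀ t : ℝ, t ∈ Icc (0:ℝ) 1 → ‖F t‖ ≤ δ := by
    intro t ht
    calc ‖F t‖ ≤ 6*‖w‖ := hF6 t ht
      _ ≤ δ := by linarith
  have hF0 : F 0 = 0 := by
    apply tendsto_nhds_unique (hFt 0 ⟨le_rfl, zero_le_one⟩)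
    have : ∀ n : ℕ, v n ⌊(2:ℝ)^n * (0:ℝ)⌋₊ = 0 := by
      intro n
      rw [mul_zero]
      simpa using hv0 n
    simp only [this]
    exact tendsto_const_nhds
  have hv2n : ∀ n, v n (2^n) = w := by
    intro n
    have h2n' : 2^n ≤ 2^(n+1) := Nat.pow_le_pow_right (by norm_num) (by omega)
    apply hΘi _ _ (hvδa n (2^n) h2n') (by linarith : ‖w‖ ≤ δ)
    rw [← hΘv n (2^n) h2n']
    have h := hiter n 0 1 (by norm_num)
    rw [Nat.zero_add, mul_one, pow_one, hu0] at h
    exact h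
  have hF1 : F 1 = w := by
    apply tendsto_nhds_unique (hFt 1 ⟨zero_le_one, le_rfl⟩)
    have : ∀ n : ℕ, v n ⌊(2:ℝ)^n * (1:ℝ)⌋₊ = w := by
      intro n
      have h1 : (2:ℝ)^n * 1 = ((2^n : ℕ) : ℝ) := by push_cast; ring
      rw [h1, Nat.floor_natCast, hv2n n]
    simp only [this]
    exact tendsto_const_nhds
  have hu2' : ∀ n, ‖u n‖ ≤ 2 * ‖w‖ / 2^n := by
    intro n
    rw [le_div_iff₀ (by positivity)]
    calc ‖u n‖ * 2^n = 2^n * ‖u n‖ := by ring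
      _ ≤ 2 * ‖w‖ := hu2 n
  have htend0 : ∀ C : ℝ, Tendsto (fun n : ℕ => C/2^n) atTop (nhds 0) := by
    intro C
    have h1 : Tendsto (fun n : ℕ => ((1:ℝ)/2)^n) atTop (nhds 0) :=
      tendsto_pow_atTop_nhds_zero_of_lt_one (by norm_num) (by norm_num)
    have h2 := h1.const_mul C
    rw [mul_zero] at h2
    apply h2.congr
    intro n
    rw [div_pow, one_pow]
    ring
  -- additivity of F via q
  have hqF : ∀ s t : ℝ, s ∈ Icc (0:ℝ) 1 → t ∈ Icc (0:ℝ) 1 → s + t ∈ Icc (0:ℝ) 1 →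
      q (F s, F t) = F (s+t) := by
    intro s t hs ht hst
    have T1 : Tendsto (fun n => q (v n ⌊(2:ℝ)^n * s⌋₊, v n ⌊(2:ℝ)^n * t⌋₊)) atTop
        (nhds (q (F s, F t))) :=
      ((hqc _ _ (hFδ s hs) (hFδ t ht)).tendsto).comp ((hFt s hs).prodMk_nhds (hFt t ht))
    have hab : ∀ n : ℕ, ⌊(2:ℝ)^n * s⌋₊ + ⌊(2:ℝ)^n * t⌋₊ ≤ 2^n := by
      intro n
      have hp : (0:ℝ) < (2:ℝ)^n := by positivity
      have h1 : (↑(⌊(2:ℝ)^n * s⌋₊ + ⌊(2:ℝ)^n * t⌋₊) : ℝ) ≤ (2:ℝ)^n := by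
        push_cast
        have hf1 := Nat.floor_le (mul_nonneg hp.le hs.1)
        have hf2 := Nat.floor_le (mul_nonneg hp.le ht.1)
        nlinarith [hst.2]
      have h2 : (↑(⌊(2:ℝ)^n * s⌋₊ + ⌊(2:ℝ)^n * t⌋₊) : ℝ) ≤ ((2^n : ℕ) : ℝ) := by
        push_cast at h1 ⊢
        exact h1
      exact_mod_cast h2
    have T2 : ∀ n : ℕ, q (v n ⌊(2:ℝ)^n * s⌋₊, v n ⌊(2:ℝ)^n * t⌋₊)
        = v n (⌊(2:ℝ)^n * s⌋₊ + ⌊(2:ℝ)^n * t⌋₊) := by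
      intro n
      exact hqvv n _ _ (le_trans (hab n) (Nat.pow_le_pow_right (by norm_num) (by omega)))
    have T3 : ∀ n : ℕ, ‖v n (⌊(2:ℝ)^n * s⌋₊ + ⌊(2:ℝ)^n * t⌋₊)
        - v n ⌊(2:ℝ)^n * (s+t)⌋₊‖ ≤ 2 * ‖u n‖ := by
      intro n
      have hp : (0:ℝ) < (2:ℝ)^n := by positivity
      set A := ⌊(2:ℝ)^n * s⌋₊
      set B := ⌊(2:ℝ)^n * t⌋₊
      set C := ⌊(2:ℝ)^n * (s+t)⌋₊
      have hc1 : A + B ≤ C := by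
        apply Nat.le_floor
        push_cast
        have hf1 := Nat.floor_le (mul_nonneg hp.le hs.1)
        have hf2 := Nat.floor_le (mul_nonneg hp.le ht.1)
        nlinarith
      have hc2 : C ≤ A + B + 1 := by
        have hl1 := Nat.lt_floor_add_one ((2:ℝ)^n * s)
        have hl2 := Nat.lt_floor_add_one ((2:ℝ)^n * t)
        have : (2:ℝ)^n * (s+t) < ((A + B + 2 : ℕ) : ℝ) := by
          push_cast
          nlinarith
        have := (Nat.floor_lt (mul_nonneg hp.le (by linarith [hs.1, ht.1]))).mpr this
        omega
      rcases (by omega : C = A + B ∨ C = A + B + 1) with h|h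
      · rw [h]
        simp only [sub_self, norm_zero]
        positivity
      · rw [h, hvsucc n (A+B), norm_sub_rev]
        apply hq_a
        · have := hv6 n (A+B) (hab n)
          linarith
        · have := huW n
          linarith
    have T4 : Tendsto (fun n => v n (⌊(2:ℝ)^n * s⌋₊ + ⌊(2:ℝ)^n * t⌋₊)) atTop
        (nhds (F (s+t))) := by
      rw [tendsto_iff_dist_tendsto_zero]
      apply squeeze_zero (fun n => dist_nonneg) (g := fun n => 16 * ‖w‖/2^n)
      · intro n
        have h1 := T3 n
        have h2 := hFK (s+t) hst n
        have h3 := hu2' n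
        calc dist (v n (⌊(2:ℝ)^n * s⌋₊ + ⌊(2:ℝ)^n * t⌋₊)) (F (s+t))
            ≤ dist (v n (⌊(2:ℝ)^n * s⌋₊ + ⌊(2:ℝ)^n * t⌋₊)) (v n ⌊(2:ℝ)^n * (s+t)⌋₊)
              + dist (v n ⌊(2:ℝ)^n * (s+t)⌋₊) (F (s+t)) := dist_triangle _ _ _
          _ ≤ 2 * ‖u n‖ + 12 * ‖w‖ / 2^n := by
              rw [dist_eq_norm, dist_eq_norm, norm_sub_rev (v n ⌊(2:ℝ)^n * (s+t)⌋₊)]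
              exact add_le_add h1 h2
          _ ≤ 2 * (2 * ‖w‖ / 2^n) + 12 * ‖w‖ / 2^n := by linarith
          _ = 16 * ‖w‖/2^n := by ring
      · exact htend0 _
    exact tendsto_nhds_unique (T1.congr T2) T4
  -- symmetry of q on F-values
  have hqsymm : ∀ s t : ℝ, s ∈ Icc (0:ℝ) 1 → t ∈ Icc (0:ℝ) 1 →
      q (F s, F t) = q (F t, F s) := by
    intro s t hs ht
    have T1 : Tendsto (fun n => q (v n ⌊(2:ℝ)^n * s⌋₊, v n ⌊(2:ℝ)^n * t⌋₊)) atTop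
        (nhds (q (F s, F t))) :=
      ((hqc _ _ (hFδ s hs) (hFδ t ht)).tendsto).comp ((hFt s hs).prodMk_nhds (hFt t ht))
    have T1' : Tendsto (fun n => q (v n ⌊(2:ℝ)^n * t⌋₊, v n ⌊(2:ℝ)^n * s⌋₊)) atTop
        (nhds (q (F t, F s))) :=
      ((hqc _ _ (hFδ t ht) (hFδ s hs)).tendsto).comp ((hFt t ht).prodMk_nhds (hFt s hs))
    have heq : ∀ n : ℕ, q (v n ⌊(2:ℝ)^n * s⌋₊, v n ⌊(2:ℝ)^n * t⌋₊)
        = q (v n ⌊(2:ℝ)^n * t⌋₊, v n ⌊(2:ℝ)^n * s⌋₊) := by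
      intro n
      have hsn : ⌊(2:ℝ)^n * s⌋₊ ≤ 2^n := hfl n s hs.1 hs.2
      have htn : ⌊(2:ℝ)^n * t⌋₊ ≤ 2^n := hfl n t ht.1 ht.2
      have hsum : ⌊(2:ℝ)^n * s⌋₊ + ⌊(2:ℝ)^n * t⌋₊ ≤ 2^(n+1) := by
        calc ⌊(2:ℝ)^n * s⌋₊ + ⌊(2:ℝ)^n * t⌋₊ ≤ 2^n + 2^n := Nat.add_le_add hsn htn
          _ = 2^(n+1) := by ring
      rw [hqvv n _ _ hsum, hqvv n _ _ (by omega : ⌊(2:ℝ)^n * t⌋₊ + ⌊(2:ℝ)^n * s⌋₊ ≤ 2^(n+1)),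
        Nat.add_comm]
    exact tendsto_nhds_unique (T1.congr heq) T1'
  -- continuity of F
  have hFd : ∀ n : ℕ, ∀ t t' : ℝ, t ∈ Icc (0:ℝ) 1 → t' ∈ Icc (0:ℝ) 1 →
      |t - t'| ≤ 1/2^n → ‖F t - F t'‖ ≤ 28 * ‖w‖/2^n := by
    intro n t t' ht ht' hd
    have hp : (0:ℝ) < (2:ℝ)^n := by positivity
    set A := ⌊(2:ℝ)^n * t⌋₊
    set B := ⌊(2:ℝ)^n * t'⌋₊
    have hA : A ≤ 2^n := hfl n t ht.1 ht.2
    have hB : B ≤ 2^n := hfl n t' ht'.1 ht'.2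
    have habs : |(2:ℝ)^n * t - (2:ℝ)^n * t'| ≤ 1 := by
      rw [← mul_sub, abs_mul, abs_of_pos hp]
      calc (2:ℝ)^n * |t - t'| ≤ (2:ℝ)^n * (1/2^n) := by
            apply mul_le_mul_of_nonneg_left hd hp.le
        _ = 1 := by field_simp
    have hAB : A ≤ B + 1 ∧ B ≤ A + 1 := by
      constructor
      · have h1 : (2:ℝ)^n * t ≤ (2:ℝ)^n * t' + 1 := by
          have := abs_le.mp habs
          linarith [this.1, this.2]
        calc A ≤ ⌊(2:ℝ)^n * t' + 1⌋₊ := Nat.floor_mono h1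
          _ = B + 1 := Nat.floor_add_one (mul_nonneg hp.le ht'.1)
      · have h1 : (2:ℝ)^n * t' ≤ (2:ℝ)^n * t + 1 := by
          have := abs_le.mp habs
          linarith [this.1, this.2]
        calc B ≤ ⌊(2:ℝ)^n * t + 1⌋₊ := Nat.floor_mono h1
          _ = A + 1 := Nat.floor_add_one (mul_nonneg hp.le ht.1)
    have hmid : ‖v n A - v n B‖ ≤ 2 * ‖u n‖ := by
      have hvsmall : ∀ m : ℕ, m ≤ 2^n → ‖v n m‖ ≤ 12 * ‖w‖ := by
        intro m hm
        have := hv6 n m hm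
        linarith
      rcases (by omega : A = B ∨ A = B + 1 ∨ B = A + 1) with h|h|h
      · rw [h]
        simp only [sub_self, norm_zero]
        positivity
      · rw [h, hvsucc n B]
        exact hq_a _ _ (hvsmall B hB) (by linarith [huW n])
      · rw [h, hvsucc n A, norm_sub_rev]
        exact hq_a _ _ (hvsmall A hA) (by linarith [huW n])
    calc ‖F t - F t'‖
        = ‖(F t - v n A) + (v n A - v n B) + (v n B - F t')‖ := by congr 1; abel
      _ ≤ ‖F t - v n A‖ + ‖v n A - v n B‖ + ‖v n B - F t'‖ := norm_add₃_le
      _ ≤ 12 * ‖w‖/2^n + 2 * ‖u n‖ + 12 * ‖w‖/2^n := by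
          have h1 := hFK t ht n
          have h2 := hFK t' ht' n
          rw [norm_sub_rev] at h2
          exact add_le_add (add_le_add h1 hmid) h2
      _ ≤ 12 * ‖w‖/2^n + 2 * (2 * ‖w‖/2^n) + 12 * ‖w‖/2^n := by
          have := hu2' n
          linarith
      _ = 28 * ‖w‖/2^n := by ring
  have hFcont : ContinuousOn F (Icc (0:ℝ) 1) := by
    rw [Metric.continuousOn_iff]
    intro t ht ε hε
    obtain ⟨n, hn⟩ := ((htend0 (28*‖w‖)).eventually (gt_mem_nhds hε)).exists
    refine ⟨1/2^n, by positivity, ?_⟩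
    intro t' ht' hdist
    rw [dist_eq_norm]
    calc ‖F t' - F t‖ ≤ 28*‖w‖/2^n := by
          apply hFd n t' t ht' ht
          rw [Real.dist_eq] at hdist
          exact le_of_lt hdist
      _ < ε := hn
  -- the local one-parameter subgroup
  refine ⟨fun t => Θ (F t), ?_, ?_, ?_, ?_, ?_⟩
  · intro t ht
    exact (hΘc (F t) (hFδ t ht)).comp_continuousWithinAt (hFcont t ht)
  · show Θ (F 0) = 1
    rw [hF0, hΘ1]
  · show Θ (F 1) = Θ w
    rw [hF1]
  · intro a b ha hb hab1
    have hamem : a ∈ Icc (0:ℝ) 1 := ⟨ha, by linarith⟩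
    have hbmem : b ∈ Icc (0:ℝ) 1 := ⟨hb, by linarith⟩
    have habmem : a + b ∈ Icc (0:ℝ) 1 := ⟨by linarith, hab1⟩
    show Θ (F (a+b)) = Θ (F a) * Θ (F b)
    rw [hΘm _ _ (hFδ a hamem) (hFδ b hbmem), hqF a b hamem hbmem habmem]
  · intro a b ha hb
    show Θ (F a) * Θ (F b) = Θ (F b) * Θ (F a)
    rw [hΘm _ _ (hFδ a ha) (hFδ b hb), hΘm _ _ (hFδ b hb) (hFδ a ha), hqsymm a b ha hb]

end AuxC

/-- In a Lie group modeled on a finite-dimensional real normed space, some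
neighborhood of the identity is covered by one-parameter subgroups. -/
theorem exists_nhds_covered_by_one_parameter_subgroups
    {E : Type*} [NormedAddCommGroup E] [NormedSpace ℝ E] [FiniteDimensional ℝ E]
    (G : Type*) [TopologicalSpace G] [ChartedSpace E G] [Group G]
    [IsTopologicalGroup G] [LieGroup 𝓘(ℝ, E) (⊤ : ℕ∞) G] :
    ∃ U ∈ nhds (1 : G), ∀ g ∈ U, ∃ X : ℝ → G,
      Continuous X ∧ (∀ s t : ℝ, X (s + t) = X s * X t) ∧ X 1 = g := by
  haveI : CompleteSpace E := FiniteDimensional.complete ℝ E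
  set φ : PartialEquiv G E := extChartAt 𝓘(ℝ, E) (1 : G) with hφ
  set x₀ : E := φ 1 with hx₀
  have hopen_t : IsOpen φ.target := isOpen_extChartAt_target (1 : G)
  have hopen_s : IsOpen φ.source := isOpen_extChartAt_source (1 : G)
  have h1s : (1:G) ∈ φ.source := mem_extChartAt_source (E := E) (1 : G)
  have hx₀t : x₀ ∈ φ.target := (extChartAt 𝓘(ℝ, E) (1:G)).map_source h1s
  have hsymm1 : φ.symm x₀ = 1 := (extChartAt 𝓘(ℝ, E) (1:G)).left_inv h1s
  have hφcont : ∀ g ∈ φ.source, ContinuousAt φ g := fun g hg =>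
    (continuousOn_extChartAt (1:G)).continuousAt (hopen_s.mem_nhds hg)
  have hsymm_cont : ∀ y ∈ φ.target, ContinuousAt φ.symm y := fun y hy =>
    (continuousOn_extChartAt_symm (1:G)).continuousAt (hopen_t.mem_nhds hy)
  -- multiplication is smooth, read in the chart
  have hsmooth : ContMDiffAt (𝓘(ℝ, E).prod 𝓘(ℝ, E)) 𝓘(ℝ, E) ((⊤:ℕ∞):WithTop ℕ∞)
      (fun p : G × G => p.1 * p.2) (1, 1) := (contMDiff_mul 𝓘(ℝ, E) _).contMDiffAt
  have hP : ContDiffAt ℝ ((⊤:ℕ∞):WithTop ℕ∞) (fun p : E × E => φ (φ.symm p.1 * φ.symm p.2)) (x₀, x₀) := by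
    have h := (contMDiffAt_iff.mp hsmooth).2
    rw [extChartAt_prod] at h
    rw [ModelWithCorners.range_eq_univ, contDiffWithinAt_univ] at h
    have heq : ((extChartAt 𝓘(ℝ, E) ((1:G) * (1:G))) ∘ (fun p : G × G => p.1 * p.2) ∘
        ((extChartAt 𝓘(ℝ, E) (1:G)).prod (extChartAt 𝓘(ℝ, E) (1:G))).symm)
        = fun p : E × E => φ (φ.symm p.1 * φ.symm p.2) := by
      funext p
      simp [hφ, Function.comp]
    rw [heq] at h
    have hpt : ((extChartAt 𝓘(ℝ, E) (1:G)).prod (extChartAt 𝓘(ℝ, E) (1:G))) (1, 1)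
        = (x₀, x₀) := rfl
    rw [hpt] at h
    exact h
  -- the shifted product map in the chart
  set q : E × E → E := fun p => φ (φ.symm (x₀ + p.1) * φ.symm (x₀ + p.2)) - x₀ with hqdef
  have htr : ContDiffAt ℝ ((⊤:ℕ∞):WithTop ℕ∞) (fun p : E × E => (x₀ + p.1, x₀ + p.2))
      ((0:E), (0:E)) :=
    (((contDiff_const.add contDiff_fst).prodMk (contDiff_const.add contDiff_snd)).contDiffAt)
  have hqdiff : ContDiffAt ℝ ((⊤:ℕ∞):WithTop ℕ∞) q ((0:E),(0:E)) := by
    have hP' : ContDiffAt ℝ ((⊤:ℕ∞):WithTop ℕ∞)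
        (fun p : E × E => φ (φ.symm p.1 * φ.symm p.2))
        ((fun p : E × E => (x₀ + p.1, x₀ + p.2)) ((0:E),(0:E))) := by
      simpa using hP
    have hcomp := ContDiffAt.comp ((0:E),(0:E)) hP' htr
    exact hcomp.sub contDiffAt_const
  -- neighbourhood facts
  have hE1 : ∀ᶠ z : E in nhds 0, x₀ + z ∈ φ.target := by
    have hc : ContinuousAt (fun z : E => x₀ + z) 0 :=
      (continuous_const.add continuous_id).continuousAt
    have hmem : φ.target ∈ nhds ((fun z : E => x₀ + z) 0) := by
      apply hopen_t.mem_nhds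
      simpa using hx₀t
    exact hc hmem
  have hmul_cont : ∀ a b : E, x₀ + a ∈ φ.target → x₀ + b ∈ φ.target →
      ContinuousAt (fun p : E × E => φ.symm (x₀ + p.1) * φ.symm (x₀ + p.2)) (a, b) := by
    intro a b ha hb
    have h1 : ContinuousAt (fun z : E => φ.symm (x₀ + z)) a :=
      ContinuousAt.comp (x := a) (f := fun z : E => x₀ + z) (hsymm_cont _ ha)
        ((continuous_const.add continuous_id).continuousAt)
    have h2 : ContinuousAt (fun z : E => φ.symm (x₀ + z)) b :=
      ContinuousAt.comp (x := b) (f := fun z : E => x₀ + z) (hsymm_cont _ hb)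
        ((continuous_const.add continuous_id).continuousAt)
    exact (ContinuousAt.comp (x := ((a, b) : E × E)) (f := Prod.fst) h1 continuousAt_fst).mul
      (ContinuousAt.comp (x := ((a, b) : E × E)) (f := Prod.snd) h2 continuousAt_snd)
  have hE2 : ∀ᶠ p : E × E in nhds ((0:E),(0:E)),
      φ.symm (x₀ + p.1) * φ.symm (x₀ + p.2) ∈ φ.source := by
    have hc := hmul_cont 0 0 (by simpa using hx₀t) (by simpa using hx₀t)
    have hmem : φ.source ∈ nhds
        ((fun p : E × E => φ.symm (x₀ + p.1) * φ.symm (x₀ + p.2)) ((0:E),(0:E))) := by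
      apply hopen_s.mem_nhds
      show φ.symm (x₀ + 0) * φ.symm (x₀ + 0) ∈ φ.source
      rw [add_zero, hsymm1, one_mul]
      exact h1s
    exact hc hmem
  have hq_right : ∀ᶠ z : E in nhds 0, q (z, 0) = z := by
    filter_upwards [hE1] with z hz
    show φ (φ.symm (x₀ + z) * φ.symm (x₀ + 0)) - x₀ = z
    rw [add_zero, hsymm1, mul_one, (extChartAt 𝓘(ℝ, E) (1:G)).right_inv hz]
    abel
  have hq_left : ∀ᶠ z : E in nhds 0, q (0, z) = z := by
    filter_upwards [hE1] with z hz
    show φ (φ.symm (x₀ + 0) * φ.symm (x₀ + z)) - x₀ = z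
    rw [add_zero, hsymm1, one_mul, (extChartAt 𝓘(ℝ, E) (1:G)).right_inv hz]
    abel
  -- the error bound
  obtain ⟨L, hL, δe, hδe, hebound⟩ := aux_bilin_bound (fun p : E × E => q p - p.1 - p.2)
    (by
      have h2 : ContDiffAt ℝ 2 q ((0:E),(0:E)) := hqdiff.of_le (by
        rw [show ((2:WithTop ℕ∞)) = (((2:ℕ∞)):WithTop ℕ∞) from rfl]
        exact WithTop.coe_le_coe.mpr le_top)
      exact (h2.sub contDiff_fst.contDiffAt).sub contDiff_snd.contDiffAt)
    (by filter_upwards [hq_right] with z hz; simp [hz])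
    (by filter_upwards [hq_left] with z hz; simp [hz])
  -- the square root
  obtain ⟨sq, hsqc, hsq0, hsqev⟩ := aux_sqrt_exists q hqdiff hq_right hq_left
  have hcsmall : ∀ᶠ y : E in nhds 0, ‖sq y‖ ≤ min δe (1/(2*L)) := by
    have hpos : 0 < min δe (1/(2*L)) := lt_min hδe (by positivity)
    have hmem : closedBall (0:E) (min δe (1/(2*L))) ∈ nhds (sq 0) := by
      rw [hsq0]
      exact closedBall_mem_nhds _ hpos
    filter_upwards [hsqc hmem] with y hy
    simpa [mem_closedBall, dist_zero_right] using hy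
  -- radii
  obtain ⟨r1, hr1, hB1⟩ := Metric.eventually_nhds_iff.mp hE1
  obtain ⟨r2, hr2, hB2⟩ := Metric.eventually_nhds_iff.mp hE2
  obtain ⟨r3, hr3, hB3⟩ := Metric.eventually_nhds_iff.mp hsqev
  obtain ⟨r4, hr4, hB4⟩ := Metric.eventually_nhds_iff.mp hcsmall
  set δ : ℝ := min (min (r1/2) (r2/2)) (min (min (r3/2) (r4/2)) δe) with hδdef
  have hδpos : 0 < δ :=
    lt_min (lt_min (by linarith) (by linarith))
      (lt_min (lt_min (by linarith) (by linarith)) hδe)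
  have hδe' : δ ≤ δe := le_trans (min_le_right _ _) (min_le_right _ _)
  have hδr1 : δ < r1 := lt_of_le_of_lt (le_trans (min_le_left _ _) (min_le_left _ _))
    (by linarith)
  have hδr2 : δ < r2 := lt_of_le_of_lt (le_trans (min_le_left _ _) (min_le_right _ _))
    (by linarith)
  have hδr3 : δ < r3 := lt_of_le_of_lt
    (le_trans (min_le_right _ _) (le_trans (min_le_left _ _) (min_le_left _ _))) (by linarith)
  have hδr4 : δ < r4 := lt_of_le_of_lt
    (le_trans (min_le_right _ _) (le_trans (min_le_left _ _) (min_le_right _ _))) (by linarith)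
  -- dictionary facts
  have hA : ∀ z : E, ‖z‖ ≤ δ → x₀ + z ∈ φ.target := by
    intro z hz
    apply hB1
    rw [dist_zero_right]
    exact lt_of_le_of_lt hz hδr1
  have hprod : ∀ a b : E, ‖a‖ ≤ δ → ‖b‖ ≤ δ →
      φ.symm (x₀ + a) * φ.symm (x₀ + b) ∈ φ.source := by
    intro a b ha hb
    refine hB2 (show dist ((a,b) : E × E) ((0:E),(0:E)) < r2 from ?_)
    rw [Prod.dist_eq]
    apply max_lt
    · rw [dist_zero_right]; exact lt_of_le_of_lt ha hδr2
    · rw [dist_zero_right]; exact lt_of_le_of_lt hb hδr2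
  set Θ : E → G := fun z => φ.symm (x₀ + z) with hΘdef
  have hΘ1 : Θ 0 = 1 := by
    show φ.symm (x₀ + 0) = 1
    rw [add_zero, hsymm1]
  have hΘm : ∀ a b : E, ‖a‖ ≤ δ → ‖b‖ ≤ δ → Θ a * Θ b = Θ (q (a,b)) := by
    intro a b ha hb
    show φ.symm (x₀ + a) * φ.symm (x₀ + b)
      = φ.symm (x₀ + (φ (φ.symm (x₀ + a) * φ.symm (x₀ + b)) - x₀))
    rw [add_sub_cancel]
    exact ((extChartAt 𝓘(ℝ, E) (1:G)).left_inv (hprod a b ha hb)).symm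
  have hΘi : ∀ a b : E, ‖a‖ ≤ δ → ‖b‖ ≤ δ → Θ a = Θ b → a = b := by
    intro a b ha hb hab
    have h1 : φ (φ.symm (x₀ + a)) = x₀ + a :=
      (extChartAt 𝓘(ℝ, E) (1:G)).right_inv (hA a ha)
    have h2 : φ (φ.symm (x₀ + b)) = x₀ + b :=
      (extChartAt 𝓘(ℝ, E) (1:G)).right_inv (hA b hb)
    have := congrArg φ hab
    rw [show φ (Θ a) = φ (φ.symm (x₀ + a)) from rfl,
      show φ (Θ b) = φ (φ.symm (x₀ + b)) from rfl, h1, h2] at this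
    exact add_left_cancel this
  have hΘc : ∀ a : E, ‖a‖ ≤ δ → ContinuousAt Θ a := by
    intro a ha
    exact ContinuousAt.comp (x := a) (f := fun z : E => x₀ + z)
      (hsymm_cont _ (hA a ha)) ((continuous_const.add continuous_id).continuousAt)
  have hqc : ∀ a b : E, ‖a‖ ≤ δ → ‖b‖ ≤ δ → ContinuousAt q (a,b) := by
    intro a b ha hb
    have hm := hmul_cont a b (hA a ha) (hA b hb)
    have hφc := hφcont _ (hprod a b ha hb)
    exact (ContinuousAt.comp (x := ((a:E),(b:E))) hφc hm).sub continuousAt_const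
  have he : ∀ a b : E, ‖a‖ ≤ δ → ‖b‖ ≤ δ → ‖q (a,b) - a - b‖ ≤ L * ‖a‖ * ‖b‖ := by
    intro a b ha hb
    have := hebound a b (le_trans ha hδe') (le_trans hb hδe')
    simpa using this
  have hsq' : ∀ y : E, ‖y‖ ≤ δ → q (sq y, sq y) = y ∧ ‖sq y‖ ≤ 3/4 * ‖y‖ ∧
      ‖sq y‖ ≤ ‖y‖/2 * (1 + L * ‖y‖) := by
    intro y hy
    have hqy : q (sq y, sq y) = y := by
      apply hB3
      rw [dist_zero_right]
      exact lt_of_le_of_lt hy hδr3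
    have hsmall : ‖sq y‖ ≤ min δe (1/(2*L)) := by
      apply hB4
      rw [dist_zero_right]
      exact lt_of_le_of_lt hy hδr4
    have hse : ‖sq y‖ ≤ δe := le_trans hsmall (min_le_left _ _)
    have hsL : L * ‖sq y‖ ≤ 1/2 := by
      have h1 : ‖sq y‖ ≤ 1/(2*L) := le_trans hsmall (min_le_right _ _)
      calc L * ‖sq y‖ ≤ L * (1/(2*L)) := mul_le_mul_of_nonneg_left h1 hL.le
        _ = 1/2 := by field_simp
    have herr := hebound (sq y) (sq y) hse hse
    simp only [] at herr
    rw [hqy] at herr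
    -- ‖y - sq y - sq y‖ ≤ L ‖sq y‖ ‖sq y‖
    have htri : 2 * ‖sq y‖ ≤ ‖y‖ + L * ‖sq y‖ * ‖sq y‖ := by
      have h1 : ‖sq y + sq y‖ = 2 * ‖sq y‖ := by
        rw [← two_smul ℝ (sq y), norm_smul]
        simp
      have h2 : ‖sq y + sq y‖ - ‖y‖ ≤ ‖(sq y + sq y) - y‖ := norm_sub_norm_le _ _
      have h3 : ‖(sq y + sq y) - y‖ = ‖y - sq y - sq y‖ := by
        rw [norm_sub_rev]
        congr 1
        abel
      rw [h1, h3] at h2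
      linarith
    have hS0 : (0:ℝ) ≤ ‖sq y‖ := norm_nonneg _
    have hY0 : (0:ℝ) ≤ ‖y‖ := norm_nonneg _
    have h34 : ‖sq y‖ ≤ 3/4 * ‖y‖ := by nlinarith
    refine ⟨hqy, h34, ?_⟩
    have h23 : ‖sq y‖ ≤ 2/3 * ‖y‖ := by nlinarith
    have hkey : L * ‖sq y‖ * ‖sq y‖ ≤ L * (2/3 * ‖y‖) * ‖sq y‖ := by
      apply mul_le_mul_of_nonneg_right _ hS0
      exact mul_le_mul_of_nonneg_left h23 hL.le
    have hkey2 : L * (2/3 * ‖y‖) * ‖sq y‖ ≤ L * (2/3 * ‖y‖) * (2/3 * ‖y‖) := by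
      apply mul_le_mul_of_nonneg_left h23
      positivity
    nlinarith [mul_nonneg hL.le (mul_nonneg hY0 hY0)]
  -- the neighbourhood U
  set ε : ℝ := min (δ/40) (1/(40*L)) with hεdef
  have hε : 0 < ε := lt_min (by positivity) (by positivity)
  refine ⟨φ.source ∩ φ ⁻¹' (ball x₀ ε), ?_, ?_⟩
  · exact inter_mem (hopen_s.mem_nhds h1s)
      ((hφcont 1 h1s).preimage_mem_nhds (ball_mem_nhds _ hε))
  · intro g hg
    obtain ⟨hgs, hgb⟩ := hg
    set w : E := φ g - x₀ with hwdef
    have hwn : ‖w‖ < ε := by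
      rw [hwdef, ← dist_eq_norm]
      exact mem_ball.mp hgb
    have hw1 : ‖w‖ ≤ δ/40 := le_of_lt (lt_of_lt_of_le hwn (min_le_left _ _))
    have hw2 : L * ‖w‖ ≤ 1/40 := by
      have h1 : ‖w‖ ≤ 1/(40*L) := le_of_lt (lt_of_lt_of_le hwn (min_le_right _ _))
      calc L * ‖w‖ ≤ L * (1/(40*L)) := mul_le_mul_of_nonneg_left h1 hL.le
        _ = 1/40 := by field_simp
    obtain ⟨X, hXc, hX0, hX1, hXadd, hXcomm⟩ :=
      aux_core q Θ sq L δ hL hδpos he hsq' hqc hΘ1 hΘm hΘi hΘc w hw1 hw2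
    obtain ⟨Y, hYc, hYadd, hY1⟩ := aux_extend X hXc hX0 hXadd hXcomm
    refine ⟨Y, hYc, hYadd, ?_⟩
    rw [hY1, hX1]
    show φ.symm (x₀ + (φ g - x₀)) = g
    rw [add_sub_cancel]
    exact (extChartAt 𝓘(ℝ, E) (1:G)).left_inv hgs
end
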